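/- arXiv:1804.09407 — 9 statements merged into one kernel-verified Lean document; each statement's English description precedes it below -/
import Mathlib

section
/- Let G = (V, E) be a finite graph with at least two vertices. Then exactly one of the following three conditions holds: (1) G is disconnected; (2) the complement of G is disconnected; (3) the quotient graph G / M(G) is prime (where a graph is prime if it has at least four vertices and its only modules are the empty set, the whole vertex set, and the singletons). -/
open SimpleGraph

/-- A module of a graph: every vertex outside `M` is adjacent to all of `M` or to none of `M`. -/
def IsModule {V : Type*} (G : SimpleGraph V) (M : Set V) : Prop :=
  ∀ x ∈ M, ∀ y ∈ M, ∀ z, z ∉ M → (G.Adj x z ↔ G.Adj y z)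

/-- A strong module: a module that overlaps no other module. -/
def IsStrongModule {V : Type*} (G : SimpleGraph V) (M : Set V) : Prop :=
  IsModule G M ∧ ∀ M' : Set V, IsModule G M' → M ⊆ M' ∨ M' ⊆ M ∨ Disjoint M M'

/-- `M(G)`: the inclusion-wise maximal strong modules of `G` that are proper subsets of `V`. -/
def maxStrongModules {V : Type*} (G : SimpleGraph V) : Set (Set V) :=
  {M | IsStrongModule G M ∧ M ≠ Set.univ ∧
    ∀ M' : Set V, IsStrongModule G M' → M' ≠ Set.univ → M ⊆ M' → M = M'}

/-- The quotient graph `G / M(G)`: two (maximal strong) modules are adjacent iff every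
vertex of one is adjacent to every vertex of the other. -/
def quotientGraph {V : Type*} (G : SimpleGraph V) :
    SimpleGraph {M : Set V // M ∈ maxStrongModules G} where
  Adj A B := A ≠ B ∧ ∀ u ∈ A.1, ∀ v ∈ B.1, G.Adj u v
  symm := ⟨fun A B ⟨hne, h⟩ => ⟨hne.symm, fun u hu w hw => (h w hw u hu).symm⟩⟩
  loopless := ⟨fun A h => h.1 rfl⟩

/-- A graph is prime if it has at least four vertices and its only modules are `∅`,
the whole vertex set, and the singletons. -/
def IsPrime {W : Type*} (H : SimpleGraph W) : Prop :=
  4 ≤ Nat.card W ∧ ∀ M : Set W, IsModule H M → M = ∅ ∨ M = Set.univ ∨ ∃ w, M = {w}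

section Aux
variable {V : Type*} {G : SimpleGraph V}

lemma singleton_isModule (v : V) : IsModule G {v} := by
  intro x hx y hy z _
  rw [Set.mem_singleton_iff] at hx hy; subst hx; subst hy; rfl

lemma singleton_strong (v : V) : IsStrongModule G {v} := by
  refine ⟨singleton_isModule v, fun M' _ => ?_⟩
  by_cases h : v ∈ M'
  · exact Or.inl (by simpa using h)
  · exact Or.inr (Or.inr (by simpa using h))

lemma compl_isModule_iff (M : Set V) : IsModule Gᶜ M ↔ IsModule G M := by
  constructor <;> intro h x hx y hy z hz
  · have := h x hx y hy z hz
    simp only [compl_adj] at this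
    constructor
    · intro hxz
      by_contra hyz
      have hyzne : y ≠ z := fun e => hz (e ▸ hy)
      exact (this.mpr ⟨hyzne, hyz⟩).2 hxz
    · intro hyz
      by_contra hxz
      have hxzne : x ≠ z := fun e => hz (e ▸ hx)
      exact (this.mp ⟨hxzne, hxz⟩).2 hyz
  · have := h x hx y hy z hz
    simp only [compl_adj]
    have hxzne : x ≠ z := fun e => hz (e ▸ hx)
    have hyzne : y ≠ z := fun e => hz (e ▸ hy)
    constructor
    · rintro ⟨-, hxz⟩; exact ⟨hyzne, fun hy' => hxz (this.mpr hy')⟩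
    · rintro ⟨-, hyz⟩; exact ⟨hxzne, fun hx' => hyz (this.mp hx')⟩

lemma compl_isStrong_iff (M : Set V) : IsStrongModule Gᶜ M ↔ IsStrongModule G M := by
  unfold IsStrongModule
  simp only [compl_isModule_iff]

lemma compl_maxStrong : maxStrongModules Gᶜ = maxStrongModules G := by
  unfold maxStrongModules
  ext M
  simp only [Set.mem_setOf_eq, compl_isStrong_iff]

lemma union_isModule {M M' : Set V} (hM : IsModule G M) (hM' : IsModule G M')
    (hov : (M ∩ M').Nonempty) : IsModule G (M ∪ M') := by
  obtain ⟨w, hwM, hwM'⟩ := hov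
  have key : ∀ x ∈ M ∪ M', ∀ z, z ∉ M ∪ M' → (G.Adj x z ↔ G.Adj w z) := by
    rintro x (hx | hx) z hz
    · exact hM x hx w hwM z (fun h => hz (Or.inl h))
    · exact hM' x hx w hwM' z (fun h => hz (Or.inr h))
  intro x hx y hy z hz
  rw [key x hx z hz, key y hy z hz]

lemma mem_of_reachable_closed {A : Set V} (hcl : ∀ x ∈ A, ∀ y, G.Adj x y → y ∈ A)
    {u v : V} (hu : u ∈ A) (h : G.Reachable u v) : v ∈ A := by
  obtain ⟨w⟩ := h
  induction w with
  | nil => exact hu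
  | cons h p ih => exact ih (hcl _ hu _ h)

lemma not_connected_of_separation {A : Set V} (hA : A.Nonempty) (hA' : Aᶜ.Nonempty)
    (hcl : ∀ x ∈ A, ∀ y, G.Adj x y → y ∈ A) : ¬G.Connected := by
  intro hc
  obtain ⟨a, ha⟩ := hA
  obtain ⟨b, hb⟩ := hA'
  exact hb (mem_of_reachable_closed hcl ha (hc.preconnected a b))

lemma compl_connected_of_not_connected [Nonempty V] (h : ¬G.Connected) : Gᶜ.Connected := by
  rw [connected_iff] at h ⊢
  refine ⟨?_, ‹_›⟩
  push_neg at h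
  have hpre : ¬G.Preconnected := fun hp => (h hp).false (Classical.arbitrary V)
  simp only [Preconnected, not_forall] at hpre
  obtain ⟨a, b, hab⟩ := hpre
  have key : ∀ u v : V, G.Adj u v → Gᶜ.Reachable u v := by
    intro u v huv
    have : ¬G.Reachable u a ∨ ¬G.Reachable u b := by
      by_contra hh
      push_neg at hh
      exact hab (hh.1.symm.trans hh.2)
    obtain hw | hw := this
    · have h1 : Gᶜ.Adj u a := ⟨fun e => hw (e ▸ Reachable.refl u), fun h' => hw h'.reachable⟩
      have h2 : Gᶜ.Adj v a := by
        refine ⟨fun e => hw ?_, fun h' => hw (huv.reachable.trans h'.reachable)⟩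
        subst e; exact huv.reachable
      exact (Adj.reachable h1).trans (Adj.reachable h2.symm)
    · have h1 : Gᶜ.Adj u b := ⟨fun e => hw (e ▸ Reachable.refl u), fun h' => hw h'.reachable⟩
      have h2 : Gᶜ.Adj v b := by
        refine ⟨fun e => hw ?_, fun h' => hw (huv.reachable.trans h'.reachable)⟩
        subst e; exact huv.reachable
      exact (Adj.reachable h1).trans (Adj.reachable h2.symm)
  intro u v
  by_cases he : u = v
  · subst he; rfl
  by_cases ha : G.Adj u v
  · exact key u v ha
  · exact Adj.reachable ⟨he, ha⟩

end Aux

section Basics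
variable {V : Type*} {G : SimpleGraph V}

lemma quotientGraph_adj_iff {A B : {M : Set V // M ∈ maxStrongModules G}} :
    (quotientGraph G).Adj A B ↔ A ≠ B ∧ ∀ u ∈ A.1, ∀ v ∈ B.1, G.Adj u v := Iff.rfl

lemma maxStrong_disjoint {A B : Set V} (hA : A ∈ maxStrongModules G)
    (hB : B ∈ maxStrongModules G) (hne : A ≠ B) : Disjoint A B := by
  obtain hs | hs | hs := hA.1.2 B hB.1.1
  · exact absurd (hA.2.2 B hB.1 hB.2.1 hs) hne
  · exact absurd (hB.2.2 A hA.1 hA.2.1 hs).symm hne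
  · exact hs

lemma maxStrong_nonempty {A : Set V} (hA : A ∈ maxStrongModules G)
    (hnt : ∃ u v : V, u ≠ v) : A.Nonempty := by
  rw [Set.nonempty_iff_ne_empty]
  rintro rfl
  obtain ⟨u, v, huv⟩ := hnt
  have h1 : ({u} : Set V) ≠ Set.univ := by
    intro h
    have : v ∈ ({u} : Set V) := h ▸ Set.mem_univ v
    have hvu : v = u := by simpa using this
    exact huv hvu.symm
  have := hA.2.2 {u} (singleton_strong u) h1 (Set.empty_subset _)
  exact Set.singleton_ne_empty u this.symm

/-- In a disconnected graph, distinct maximal strong modules have no edges between them. -/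
lemma no_edges_of_disconnected [Nonempty V] (hG : ¬G.Connected)
    {A B : Set V} (hA : A ∈ maxStrongModules G) (hB : B ∈ maxStrongModules G)
    (hne : A ≠ B) {u v : V} (hu : u ∈ A) (hv : v ∈ B) : ¬G.Adj u v := by
  intro hadj
  -- the component of u
  set C : Set V := {w | G.Reachable u w} with hC
  have hCmod : IsModule G C := by
    intro x hx y hy z hz
    constructor
    · intro h; exact absurd (Reachable.trans hx h.reachable) hz
    · intro h; exact absurd (Reachable.trans hy h.reachable) hz
  have hCne : C ≠ Set.univ := by
    intro h
    have hpre : ¬G.Preconnected := fun hp => hG ⟨hp⟩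
    simp only [SimpleGraph.Preconnected, not_forall] at hpre
    obtain ⟨a, b, hab⟩ := hpre
    have ha : G.Reachable u a := by
      have := Set.mem_univ a; rw [← h] at this; exact this
    have hb : G.Reachable u b := by
      have := Set.mem_univ b; rw [← h] at this; exact this
    exact hab (ha.symm.trans hb)
  have hCstrong : IsStrongModule G C := by
    refine ⟨hCmod, fun M' hM' => ?_⟩
    by_cases hd : Disjoint C M'
    · exact Or.inr (Or.inr hd)
    by_cases hsub : M' ⊆ C
    · exact Or.inr (Or.inl hsub)
    obtain ⟨x, hxC, hxM⟩ := Set.not_disjoint_iff.mp hd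
    obtain ⟨y, hyM, hyC⟩ := Set.not_subset.mp hsub
    left
    -- show C ⊆ M' : M' ∩ C is closed under adjacency
    have hclosed : ∀ s ∈ M' ∩ C, ∀ w, G.Adj s w → w ∈ M' ∩ C := by
      rintro s ⟨hsM, hsC⟩ w hsw
      have hwC : w ∈ C := hsC.trans hsw.reachable
      refine ⟨?_, hwC⟩
      by_contra hwM
      have := hM' s hsM y hyM w hwM
      have hyw : ¬G.Adj y w := by
        intro h
        exact hyC (hwC.trans h.symm.reachable)
      exact hyw (this.mp hsw)
    intro z hz
    have : z ∈ M' ∩ C := by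
      have hx' : x ∈ M' ∩ C := ⟨hxM, hxC⟩
      exact mem_of_reachable_closed (G := G) (A := M' ∩ C)
        (fun a ha b hab => hclosed a ha b hab) hx' (hxC.symm.trans hz)
    exact this.1
  -- A and B both contain C-like components; derive A = B ⊇ component
  have hCA : C ⊆ A := by
    obtain hs | hs | hs := hA.1.2 C hCmod
    · have := hA.2.2 C hCstrong hCne hs
      exact this ▸ Set.Subset.rfl
    · exact hs
    · exact ((Set.disjoint_left.mp hs hu) (Reachable.refl u)).elim
  have hCB : C ⊆ B := by
    have hvC : v ∈ C := hadj.reachable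
    obtain hs | hs | hs := hB.1.2 C hCmod
    · have := hB.2.2 C hCstrong hCne hs
      exact this ▸ Set.Subset.rfl
    · exact hs
    · exact ((Set.disjoint_left.mp hs hv) hvC).elim
  have : u ∈ A ∩ B := ⟨hu, hCB (Reachable.refl u)⟩
  exact (maxStrong_disjoint hA hB hne).le_bot this

lemma not_prime_of_pair_modules {W : Type*} {H : SimpleGraph W}
    (h : ∀ a b : W, a ≠ b → IsModule H {a, b}) : ¬IsPrime H := by
  rintro ⟨hcard, hmod⟩
  have hfin : Finite W := Nat.finite_of_card_ne_zero (by omega)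
  have : Nontrivial W := Finite.one_lt_card_iff_nontrivial.mp (by omega)
  obtain ⟨a, b, hab⟩ := this
  obtain h1 | h1 | ⟨w, h1⟩ := hmod {a, b} (h a b hab)
  · exact absurd h1 (Set.insert_nonempty a {b}).ne_empty
  · have : Nat.card W ≤ 2 := by
      rw [← Set.ncard_univ, ← h1]
      exact (Set.ncard_insert_le _ _).trans (by simp)
    omega
  · have ha : a ∈ ({w} : Set W) := by rw [← h1]; simp
    have hb : b ∈ ({w} : Set W) := by rw [← h1]; simp
    rw [Set.mem_singleton_iff] at ha hb
    exact hab (ha.trans hb.symm)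

end Basics

section Prime
variable {V : Type*} [Fintype V] {G : SimpleGraph V}

lemma no_overlap_univ (hG : G.Connected) (hGc : Gᶜ.Connected)
    {M M' : Set V} (hM : IsModule G M) (hM' : IsModule G M')
    (hC : (M ∩ M').Nonempty) (hA : (M \ M').Nonempty) (hB : (M' \ M).Nonempty)
    (hU : M ∪ M' = Set.univ) : False := by
  obtain ⟨b, hbM', hbM⟩ := hB
  have cover : ∀ y : V, y ∉ M \ M' → y ∈ M' := by
    intro y hy
    by_cases h : y ∈ M'
    · exact h
    · have : y ∈ M ∪ M' := hU ▸ Set.mem_univ y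
      exact absurd (Set.mem_diff_of_mem (this.resolve_right h) h) hy
  by_cases hE : ∃ a ∈ M \ M', G.Adj a b
  · -- some edge from M \ M' to b; then M \ M' is complete to its complement
    obtain ⟨a, ⟨haM, haM'⟩, hab⟩ := hE
    have all_adj : ∀ x ∈ M \ M', ∀ y, y ∉ M \ M' → G.Adj x y := by
      intro x ⟨hxM, hxM'⟩ y hy
      have hyM' : y ∈ M' := cover y hy
      -- x is adjacent to b : module M (x, a ∈ M, b ∉ M)
      have hxb : G.Adj x b := (hM x hxM a haM b hbM).mpr hab
      -- hence x adjacent to all of M' : module M' (y, b ∈ M', x ∉ M')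
      by_cases hxy : x = y
      · exact absurd (hxy ▸ Set.mem_diff_of_mem hxM hxM') hy
      have := hM' y hyM' b hbM' x hxM'
      exact (this.mpr hxb.symm).symm
    have hclosed : ∀ x ∈ M \ M', ∀ y, Gᶜ.Adj x y → y ∈ M \ M' := by
      intro x hx y hxy
      by_contra hy
      exact hxy.2 (all_adj x hx y hy)
    have : Nonempty V := ⟨b⟩
    exact (not_connected_of_separation hA ⟨b, fun h => h.2 hbM'⟩ hclosed) hGc
  · -- no edges from M \ M' to b; then M \ M' is isolated from its complement
    push_neg at hE
    have no_adj : ∀ x ∈ M \ M', ∀ y, y ∉ M \ M' → ¬G.Adj x y := by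
      intro x ⟨hxM, hxM'⟩ y hy hadj
      have hyM' : y ∈ M' := cover y hy
      -- module M' : y, b ∈ M', x ∉ M'
      have hxb : G.Adj x b := ((hM' y hyM' b hbM' x hxM').mp hadj.symm).symm
      exact hE x ⟨hxM, hxM'⟩ hxb
    have hclosed : ∀ x ∈ M \ M', ∀ y, G.Adj x y → y ∈ M \ M' := by
      intro x hx y hxy
      by_contra hy
      exact no_adj x hx y hy hxy
    exact (not_connected_of_separation hA ⟨b, fun h => h.2 hbM'⟩ hclosed) hG

def MaxProperMod (G : SimpleGraph V) (M : Set V) : Prop :=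
  IsModule G M ∧ M ≠ Set.univ ∧
    ∀ M' : Set V, IsModule G M' → M' ≠ Set.univ → M ⊆ M' → M = M'

lemma maxProper_strong (hG : G.Connected) (hGc : Gᶜ.Connected)
    {M : Set V} (hM : MaxProperMod G M) : IsStrongModule G M := by
  refine ⟨hM.1, fun M' hM' => ?_⟩
  by_cases h1 : Disjoint M M'
  · exact Or.inr (Or.inr h1)
  by_cases h2 : M' ⊆ M
  · exact Or.inr (Or.inl h2)
  by_cases h3 : M ⊆ M'
  · exact Or.inl h3
  exfalso
  obtain ⟨w, hw⟩ := Set.not_disjoint_iff.mp h1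
  have hun : IsModule G (M ∪ M') := union_isModule hM.1 hM' ⟨w, hw⟩
  by_cases hu : M ∪ M' = Set.univ
  · obtain ⟨x, hx1, hx2⟩ := Set.not_subset.mp h3
    obtain ⟨y, hy1, hy2⟩ := Set.not_subset.mp h2
    exact no_overlap_univ hG hGc hM.1 hM' ⟨w, hw⟩ ⟨x, hx1, hx2⟩ ⟨y, hy1, hy2⟩ hu
  · have := hM.2.2 (M ∪ M') hun hu Set.subset_union_left
    exact h2 (this ▸ Set.subset_union_right)

lemma exists_maxProper (h2 : 2 ≤ Fintype.card V) (v : V) :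
    ∃ M : Set V, MaxProperMod G M ∧ v ∈ M := by
  classical
  set S : Set (Set V) := {M | IsModule G M ∧ M ≠ Set.univ ∧ v ∈ M} with hS
  have hfin : S.Finite := Set.toFinite S
  have hsing : ({v} : Set V) ∈ S := by
    refine ⟨singleton_isModule v, ?_, rfl⟩
    intro h
    obtain ⟨w, hw⟩ := Fintype.exists_ne_of_one_lt_card (by omega) v
    exact hw (by simpa using (h ▸ Set.mem_univ w : w ∈ ({v} : Set V)))
  obtain ⟨M, hMS, hmax⟩ := Set.Finite.exists_maximalFor id S hfin ⟨{v}, hsing⟩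
  refine ⟨M, ⟨hMS.1, hMS.2.1, ?_⟩, hMS.2.2⟩
  intro M' hM' hM'u hsub
  exact Set.Subset.antisymm hsub (hmax ⟨hM', hM'u, hsub hMS.2.2⟩ hsub)

lemma maxStrong_iff (hG : G.Connected) (hGc : Gᶜ.Connected) (h2 : 2 ≤ Fintype.card V)
    {M : Set V} : M ∈ maxStrongModules G ↔ MaxProperMod G M := by
  constructor
  · intro hM
    have hpair : ∃ u v : V, u ≠ v := Fintype.exists_pair_of_one_lt_card (by omega)
    obtain ⟨v, hv⟩ := maxStrong_nonempty hM hpair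
    obtain ⟨N, hN, hvN⟩ := exists_maxProper (G := G) h2 v
    obtain hs | hs | hs := hM.1.2 N hN.1
    · have := hM.2.2 N (maxProper_strong hG hGc hN) hN.2.1 hs
      exact this ▸ hN
    · refine ⟨hM.1.1, hM.2.1, ?_⟩
      intro M' hM' hM'u hsub
      have := hN.2.2 M' hM' hM'u (hs.trans hsub)
      exact Set.Subset.antisymm hsub (this ▸ hs)
    · exact absurd (Set.disjoint_left.mp hs hv) (fun h => h hvN)
  · intro hM
    refine ⟨maxProper_strong hG hGc hM, hM.2.1, ?_⟩
    intro M' hM' hM'u hsub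
    exact hM.2.2 M' hM'.1 hM'u hsub

lemma adj_uniform {A B : Set V} (hA : IsModule G A) (hB : IsModule G B)
    (hd : Disjoint A B) {x x' z z' : V} (hx : x ∈ A) (hx' : x' ∈ A)
    (hz : z ∈ B) (hz' : z' ∈ B) : G.Adj x z ↔ G.Adj x' z' := by
  have h1 : G.Adj x z ↔ G.Adj x' z :=
    hA x hx x' hx' z (Set.disjoint_right.mp hd hz)
  have h2 : G.Adj z x' ↔ G.Adj z' x' :=
    hB z hz z' hz' x' (Set.disjoint_left.mp hd hx')
  rw [h1, adj_comm, h2, adj_comm]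

lemma quotient_adj_iff {A B : {M : Set V // M ∈ maxStrongModules G}} (hne : A ≠ B)
    {u v : V} (hu : u ∈ A.1) (hv : v ∈ B.1) :
    (quotientGraph G).Adj A B ↔ G.Adj u v := by
  have hne' : A.1 ≠ B.1 := fun h => hne (Subtype.ext h)
  have hd : Disjoint A.1 B.1 := maxStrong_disjoint A.2 B.2 hne'
  constructor
  · intro h; exact (quotientGraph_adj_iff.mp h).2 u hu v hv
  · intro h
    refine quotientGraph_adj_iff.mpr ⟨hne, fun u' hu' v' hv' => ?_⟩
    exact (adj_uniform A.2.1.1 B.2.1.1 hd hu' hu hv' hv).mpr h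

end Prime

section Prime2
variable {V : Type*} [Fintype V] {G : SimpleGraph V}

lemma quotient_module_trivial (hG : G.Connected) (hGc : Gᶜ.Connected)
    (h2 : 2 ≤ Fintype.card V) (𝓜 : Set {M : Set V // M ∈ maxStrongModules G})
    (hmod : IsModule (quotientGraph G) 𝓜) :
    𝓜 = ∅ ∨ 𝓜 = Set.univ ∨ ∃ w, 𝓜 = {w} := by
  have hpair : ∃ u v : V, u ≠ v := Fintype.exists_pair_of_one_lt_card (by omega)
  have cover : ∀ v : V, ∃ D : {M : Set V // M ∈ maxStrongModules G}, v ∈ D.1 := by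
    intro v
    obtain ⟨M, hM, hvM⟩ := exists_maxProper (G := G) h2 v
    exact ⟨⟨M, (maxStrong_iff hG hGc h2).mpr hM⟩, hvM⟩
  by_contra hcon
  push_neg at hcon
  obtain ⟨hne, hnu, hns⟩ := hcon
  obtain ⟨A, hA⟩ := hne
  obtain ⟨B, hB, hBA⟩ : ∃ B ∈ 𝓜, B ≠ A := by
    by_contra h
    push_neg at h
    exact hns A (Set.eq_singleton_iff_unique_mem.mpr ⟨hA, h⟩)
  obtain ⟨C, hC⟩ : ∃ C, C ∉ 𝓜 := by
    by_contra h
    push_neg at h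
    exact hnu (Set.eq_univ_of_forall h)
  set U : Set V := {v | ∃ D, D ∈ 𝓜 ∧ v ∈ D.1} with hU
  have hUmod : IsModule G U := by
    rintro x ⟨Dx, hDx, hxD⟩ y ⟨Dy, hDy, hyD⟩ z hz
    obtain ⟨Cz, hzC⟩ := cover z
    have hCz : Cz ∉ 𝓜 := fun h => hz ⟨Cz, h, hzC⟩
    have key : ∀ D, D ∈ 𝓜 → ∀ w ∈ D.1, (G.Adj w z ↔ (quotientGraph G).Adj D Cz) := by
      intro D hD w hw
      have hDCz : D ≠ Cz := fun h => hCz (h ▸ hD)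
      exact (quotient_adj_iff hDCz hw hzC).symm
    rw [key Dx hDx x hxD, key Dy hDy y hyD]
    exact hmod Dx hDx Dy hDy Cz hCz
  have hUne : U ≠ Set.univ := by
    obtain ⟨c, hc⟩ := maxStrong_nonempty C.2 hpair
    intro h
    have : c ∈ U := h ▸ Set.mem_univ c
    obtain ⟨D, hD, hcD⟩ := this
    have : D = C := by
      by_contra hDC
      have hne' : D.1 ≠ C.1 := fun h => hDC (Subtype.ext h)
      exact Set.disjoint_left.mp (maxStrong_disjoint D.2 C.2 hne') hcD hc
    exact hC (this ▸ hD)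
  have hAU : A.1 ⊆ U := fun v hv => ⟨A, hA, hv⟩
  have hAmax : MaxProperMod G A.1 := (maxStrong_iff hG hGc h2).mp A.2
  have : A.1 = U := hAmax.2.2 U hUmod hUne hAU
  obtain ⟨b, hb⟩ := maxStrong_nonempty B.2 hpair
  have hbU : b ∈ U := ⟨B, hB, hb⟩
  have hbA : b ∈ A.1 := this ▸ hbU
  have hne' : B.1 ≠ A.1 := fun h => hBA (Subtype.ext h)
  exact Set.disjoint_left.mp (maxStrong_disjoint B.2 A.2 hne') hb hbA

lemma quotient_card (hG : G.Connected) (hGc : Gᶜ.Connected)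
    (h2 : 2 ≤ Fintype.card V) :
    4 ≤ Nat.card {M : Set V // M ∈ maxStrongModules G} := by
  classical
  set W := {M : Set V // M ∈ maxStrongModules G} with hW
  have hpair : ∃ u v : V, u ≠ v := Fintype.exists_pair_of_one_lt_card (by omega)
  have cover : ∀ v : V, ∃ D : W, v ∈ D.1 := by
    intro v
    obtain ⟨M, hM, hvM⟩ := exists_maxProper (G := G) h2 v
    exact ⟨⟨M, (maxStrong_iff hG hGc h2).mpr hM⟩, hvM⟩
  have hnonempty : Nonempty V := Fintype.card_pos_iff.mp (by omega)
  obtain ⟨v0⟩ := hnonempty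
  obtain ⟨A, hv0A⟩ := cover v0
  -- there are at least two parts
  obtain ⟨B, hBA⟩ : ∃ B : W, B ≠ A := by
    by_contra h
    push_neg at h
    have : A.1 = Set.univ := by
      apply Set.eq_univ_of_forall
      intro v
      obtain ⟨D, hvD⟩ := cover v
      exact (h D) ▸ hvD
    exact A.2.2.1 this
  -- there are at least three parts
  obtain ⟨C, hCA, hCB⟩ : ∃ C : W, C ≠ A ∧ C ≠ B := by
    by_contra h
    push_neg at h
    -- exactly two parts A, B : contradiction with connectivity of G or Gᶜ
    have hcov2 : ∀ v : V, v ∈ A.1 ∪ B.1 := by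
      intro v
      obtain ⟨D, hvD⟩ := cover v
      by_cases hDA : D = A
      · exact Or.inl (hDA ▸ hvD)
      · exact Or.inr ((h D hDA) ▸ hvD)
    have hABne : A.1 ≠ B.1 := fun hh => hBA (Subtype.ext hh).symm
    have hd : Disjoint A.1 B.1 := maxStrong_disjoint A.2 B.2 hABne
    obtain ⟨a, ha⟩ := maxStrong_nonempty A.2 hpair
    obtain ⟨b, hb⟩ := maxStrong_nonempty B.2 hpair
    by_cases hadj : G.Adj a b
    · -- all edges present between A and B : Gᶜ disconnected
      have hclosed : ∀ x ∈ A.1, ∀ y, Gᶜ.Adj x y → y ∈ A.1 := by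
        intro x hx y hxy
        rcases hcov2 y with hy | hy
        · exact hy
        · exact absurd ((adj_uniform A.2.1.1 B.2.1.1 hd hx ha hy hb).mpr hadj) hxy.2
      exact absurd hGc (not_connected_of_separation ⟨a, ha⟩
        ⟨b, Set.disjoint_right.mp hd hb⟩ hclosed)
    · -- no edges between A and B : G disconnected
      have hclosed : ∀ x ∈ A.1, ∀ y, G.Adj x y → y ∈ A.1 := by
        intro x hx y hxy
        rcases hcov2 y with hy | hy
        · exact hy
        · exact absurd hxy (fun hh =>
            hadj ((adj_uniform A.2.1.1 B.2.1.1 hd hx ha hy hb).mp hh))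
      exact absurd hG (not_connected_of_separation ⟨a, ha⟩
        ⟨b, Set.disjoint_right.mp hd hb⟩ hclosed)
  -- there are at least four parts
  by_cases hD : ∃ D : W, D ≠ A ∧ D ≠ B ∧ D ≠ C
  · obtain ⟨D, hDA, hDB, hDC⟩ := hD
    have : Finite W := Subtype.finite
    have hinj : Function.Injective (![A, B, C, D]) := by
      intro i j hij
      fin_cases i <;> fin_cases j <;>
        first
          | rfl
          | simp_all
    calc 4 = Nat.card (Fin 4) := by simp
    _ ≤ Nat.card W := Nat.card_le_card_of_injective _ hinj
  · exfalso
    push_neg at hD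
    -- exactly three parts A, B, C : find a two-element module of the quotient
    have hcov3 : ∀ D : W, D = A ∨ D = B ∨ D = C := by
      intro D
      by_cases h1 : D = A
      · exact Or.inl h1
      by_cases h2 : D = B
      · exact Or.inr (Or.inl h2)
      · exact Or.inr (Or.inr (hD D h1 h2))
    set H := quotientGraph G with hH
    -- find a pair {X, Y} with third vertex Z such that Adj X Z ↔ Adj Y Z
    have main : ∀ X Y Z : W, X ≠ Y → Y ≠ Z → X ≠ Z →
        (∀ D : W, D = X ∨ D = Y ∨ D = Z) →
        (H.Adj X Z ↔ H.Adj Y Z) → False := by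
      intro X Y Z hXY hYZ hXZ hcov huni
      have hmod : IsModule H {X, Y} := by
        intro x hx y hy z hz
        have hzZ : z = Z := by
          rcases hcov z with h | h | h
          · exact absurd (h ▸ (by simp : X ∈ ({X, Y} : Set W))) hz
          · exact absurd (h ▸ (by simp : Y ∈ ({X, Y} : Set W))) hz
          · exact h
        subst hzZ
        rcases hx with rfl | rfl <;> rcases hy with rfl | rfl
        · rfl
        · exact huni
        · exact huni.symm
        · rfl
      obtain h | h | ⟨w, h⟩ := quotient_module_trivial hG hGc h2 {X, Y} hmod
      · exact absurd h (Set.insert_nonempty X {Y}).ne_empty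
      · have : Z ∈ ({X, Y} : Set W) := h ▸ Set.mem_univ Z
        rcases this with hh | hh
        · exact hXZ hh.symm
        · exact hYZ (Set.mem_singleton_iff.mp hh).symm
      · have hX : X ∈ ({w} : Set W) := by rw [← h]; simp
        have hY : Y ∈ ({w} : Set W) := by rw [← h]; simp
        rw [Set.mem_singleton_iff] at hX hY
        exact hXY (hX.trans hY.symm)
    by_cases e1 : H.Adj A C ↔ H.Adj B C
    · exact main A B C (fun h => hBA h.symm) hCB.symm (fun h => hCA h.symm)
        (fun D => (hcov3 D).imp id (Or.imp id id)) e1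
    by_cases e2 : H.Adj A B ↔ H.Adj C B
    · exact main A C B (fun h => hCA h.symm) hCB (fun h => hBA h.symm)
        (fun D => by rcases hcov3 D with h | h | h <;> tauto) e2
    · -- then H.Adj B A ↔ H.Adj C A
      refine main B C A hCB.symm hCA hBA
        (fun D => by rcases hcov3 D with h | h | h <;> tauto) ?_
      have s1 : H.Adj A C ↔ H.Adj C A := ⟨Adj.symm, Adj.symm⟩
      have s2 : H.Adj A B ↔ H.Adj B A := ⟨Adj.symm, Adj.symm⟩
      have s3 : H.Adj B C ↔ H.Adj C B := ⟨Adj.symm, Adj.symm⟩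
      tauto

lemma quotient_prime (hG : G.Connected) (hGc : Gᶜ.Connected)
    (h2 : 2 ≤ Fintype.card V) : IsPrime (quotientGraph G) :=
  ⟨quotient_card hG hGc h2, quotient_module_trivial hG hGc h2⟩

end Prime2

/-- Gallai's theorem: for a graph with at least two vertices, exactly one of the following
holds: (1) `G` is disconnected; (2) its complement is disconnected; (3) the quotient graph
`G / M(G)` is prime. -/
theorem gallai_trichotomy {V : Type*} [Fintype V] (G : SimpleGraph V)
    (h2 : 2 ≤ Fintype.card V) :
    (¬G.Connected ∧ Gᶜ.Connected ∧ ¬IsPrime (quotientGraph G)) ∨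
    (G.Connected ∧ ¬Gᶜ.Connected ∧ ¬IsPrime (quotientGraph G)) ∨
    (G.Connected ∧ Gᶜ.Connected ∧ IsPrime (quotientGraph G)) := by
    have hnonempty : Nonempty V := Fintype.card_pos_iff.mp (by omega)
    have hpair : ∃ u v : V, u ≠ v := Fintype.exists_pair_of_one_lt_card (by omega)
    by_cases hG : G.Connected
    · by_cases hGc : Gᶜ.Connected
      · exact Or.inr (Or.inr ⟨hG, hGc, quotient_prime hG hGc h2⟩)
      · refine Or.inr (Or.inl ⟨hG, hGc, ?_⟩)
        -- the quotient is complete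
        apply not_prime_of_pair_modules
        have hcomplete : ∀ X Y : {M : Set V // M ∈ maxStrongModules G}, X ≠ Y →
            (quotientGraph G).Adj X Y := by
          intro X Y hXY
          have hne' : X.1 ≠ Y.1 := fun h => hXY (Subtype.ext h)
          refine quotientGraph_adj_iff.mpr ⟨hXY, fun u hu v hv => ?_⟩
          have hX' : X.1 ∈ maxStrongModules Gᶜ := compl_maxStrong.symm ▸ X.2
          have hY' : Y.1 ∈ maxStrongModules Gᶜ := compl_maxStrong.symm ▸ Y.2
          have hnc : ¬Gᶜ.Adj u v := no_edges_of_disconnected hGc hX' hY' hne' hu hv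
          have huv : u ≠ v :=
            fun h => Set.disjoint_left.mp (maxStrong_disjoint X.2 Y.2 hne') hu (h ▸ hv)
          by_contra hadj
          exact hnc ⟨huv, hadj⟩
        intro A B hAB x hx y hy z hz
        have hxz : x ≠ z := fun h => hz (h ▸ hx)
        have hyz : y ≠ z := fun h => hz (h ▸ hy)
        exact iff_of_true (hcomplete x z hxz) (hcomplete y z hyz)
    · refine Or.inl ⟨hG, compl_connected_of_not_connected hG, ?_⟩
      -- the quotient is edgeless
      apply not_prime_of_pair_modules
      have hedgeless : ∀ X Y : {M : Set V // M ∈ maxStrongModules G},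
          ¬(quotientGraph G).Adj X Y := by
        rintro X Y h
        obtain ⟨hXY, hall⟩ := quotientGraph_adj_iff.mp h
        have hne' : X.1 ≠ Y.1 := fun h => hXY (Subtype.ext h)
        obtain ⟨u, hu⟩ := maxStrong_nonempty X.2 hpair
        obtain ⟨v, hv⟩ := maxStrong_nonempty Y.2 hpair
        exact no_edges_of_disconnected hG X.2 Y.2 hne' hu hv (hall u hu v hv)
      intro A B hAB x hx y hy z hz
      exact iff_of_false (hedgeless x z) (hedgeless y z)
end

section
/- Let M be a module of a graph G = (V, E), let E_M be the edge set of the induced subgraph G[M], and let F_M ⊆ E_M be a maximum matching of G[M]. Let G'_M = (V, (E ∖ E_M) ∪ F_M). Then every maximum matching of G'_M is a maximum matching of G; in particular μ(G'_M) = μ(G). -/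
open SimpleGraph

/-- A matching: a set of edges of `G` with pairwise disjoint endpoints. -/
def IsMatching {V : Type*} (G : SimpleGraph V) (F : Set (Sym2 V)) : Prop :=
  F ⊆ G.edgeSet ∧ ∀ e ∈ F, ∀ f ∈ F, ∀ v : V, v ∈ e → v ∈ f → e = f

/-- A maximum matching: a matching of maximum cardinality. -/
def IsMaximumMatching {V : Type*} (G : SimpleGraph V) (F : Set (Sym2 V)) : Prop :=
  IsMatching G F ∧ ∀ F' : Set (Sym2 V), IsMatching G F' → F'.ncard ≤ F.ncard

/-- `μ(G)`: the maximum cardinality of a matching of `G`. -/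
noncomputable def matchNum {V : Type*} (G : SimpleGraph V) : ℕ :=
  sSup {n | ∃ F : Set (Sym2 V), IsMatching G F ∧ F.ncard = n}

/-- The subgraph of `G` induced by `M`, viewed as a graph on the same vertex set
(all edges have both endpoints in `M`). -/
def inducedOn {V : Type*} (G : SimpleGraph V) (M : Set V) : SimpleGraph V where
  Adj u v := G.Adj u v ∧ u ∈ M ∧ v ∈ M
  symm := ⟨fun u v ⟨h, hu, hv⟩ => ⟨h.symm, hv, hu⟩⟩
  loopless := ⟨fun v h => G.loopless.irrefl v h.1⟩

section Aux

variable {V : Type*}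

lemma exists_mem_sym2 (e : Sym2 V) : ∃ v, v ∈ e := by
  induction e using Sym2.ind with
  | _ x y => exact ⟨x, Sym2.mem_mk_left x y⟩

lemma mem_M_of_inducedOn_edge {G : SimpleGraph V} {M : Set V} {e : Sym2 V}
    (he : e ∈ (inducedOn G M).edgeSet) : ∀ v ∈ e, v ∈ M := by
  induction e using Sym2.ind with
  | _ x y =>
    intro v hv
    rw [Sym2.mem_iff] at hv
    rcases hv with rfl | rfl
    · exact he.2.1
    · exact he.2.2

lemma inducedOn_edgeSet_subset (G : SimpleGraph V) (M : Set V) :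
    (inducedOn G M).edgeSet ⊆ G.edgeSet := by
  intro e
  induction e using Sym2.ind with
  | _ x y => exact fun h => h.1

lemma mem_inducedOn_of {G : SimpleGraph V} {M : Set V} {e : Sym2 V}
    (he : e ∈ G.edgeSet) (h : ∀ v ∈ e, v ∈ M) : e ∈ (inducedOn G M).edgeSet := by
  induction e using Sym2.ind with
  | _ x y => exact ⟨he, h x (Sym2.mem_mk_left x y), h y (Sym2.mem_mk_right x y)⟩

lemma Gp_edgeSet (G : SimpleGraph V) (M : Set V) {FM : Set (Sym2 V)}
    (hFM : FM ⊆ (inducedOn G M).edgeSet) :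
    (SimpleGraph.fromEdgeSet ((G.edgeSet \ (inducedOn G M).edgeSet) ∪ FM)).edgeSet
      = (G.edgeSet \ (inducedOn G M).edgeSet) ∪ FM := by
  rw [edgeSet_fromEdgeSet]
  ext e
  simp only [Set.mem_diff, Set.mem_setOf_eq]
  constructor
  · exact fun h => h.1
  · intro h
    refine ⟨h, ?_⟩
    rcases h with ⟨heG, -⟩ | heFM
    · exact G.not_isDiag_of_mem_edgeSet heG
    · exact (inducedOn G M).not_isDiag_of_mem_edgeSet (hFM heFM)

lemma sym2_vertexSet_ncard {e : Sym2 V} (he : ¬ e.IsDiag) : {v : V | v ∈ e}.ncard = 2 := by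
  induction e using Sym2.ind with
  | _ x y =>
    have hxy : x ≠ y := fun h => he (Sym2.mk_isDiag_iff.mpr h)
    have hset : {v : V | v ∈ s(x, y)} = {x, y} := by
      ext v; simp [Sym2.mem_iff]
    rw [hset, Set.ncard_pair hxy]

lemma support_ncard [Fintype V] (F : Set (Sym2 V))
    (h1 : ∀ e ∈ F, ¬ e.IsDiag)
    (h2 : ∀ e ∈ F, ∀ f ∈ F, ∀ v : V, v ∈ e → v ∈ f → e = f) :
    {v : V | ∃ e ∈ F, v ∈ e}.ncard = 2 * F.ncard := by
  classical
  refine Set.Finite.induction_on (motive := fun F _ =>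
      (∀ e ∈ F, ¬ e.IsDiag) →
      (∀ e ∈ F, ∀ f ∈ F, ∀ v : V, v ∈ e → v ∈ f → e = f) →
      {v : V | ∃ e ∈ F, v ∈ e}.ncard = 2 * F.ncard)
    F (Set.toFinite F) ?_ ?_ h1 h2
  · intro _ _; simp
  · intro e s hes hs ih h1 h2
    have key : {v : V | ∃ f ∈ insert e s, v ∈ f}
        = {v : V | v ∈ e} ∪ {v : V | ∃ f ∈ s, v ∈ f} := by
      ext v
      constructor
      · rintro ⟨f, (rfl | hf), hv⟩
        · exact Or.inl hv
        · exact Or.inr ⟨f, hf, hv⟩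
      · rintro (hv | ⟨f, hf, hv⟩)
        · exact ⟨e, Or.inl rfl, hv⟩
        · exact ⟨f, Or.inr hf, hv⟩
    have hdisj : Disjoint {v : V | v ∈ e} {v : V | ∃ f ∈ s, v ∈ f} := by
      rw [Set.disjoint_left]
      rintro v hv ⟨f, hf, hvf⟩
      exact hes ((h2 e (Or.inl rfl) f (Or.inr hf) v hv hvf) ▸ hf)
    rw [key, Set.ncard_union_eq hdisj (Set.toFinite _) (Set.toFinite _),
      sym2_vertexSet_ncard (h1 e (Or.inl rfl)),
      Set.ncard_insert_of_notMem hes (Set.toFinite _),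
      ih (fun f hf => h1 f (Or.inr hf))
        (fun f hf g hg v hv hv' => h2 f (Or.inr hf) g (Or.inr hg) v hv hv')]
    ring

lemma exists_matching_Gp [Fintype V]
    {G : SimpleGraph V} {M : Set V} (hM : IsModule G M)
    {FM : Set (Sym2 V)} (hFM : IsMaximumMatching (inducedOn G M) FM)
    {N : Set (Sym2 V)} (hN : IsMatching G N) :
    ∃ N' : Set (Sym2 V),
      IsMatching (SimpleGraph.fromEdgeSet ((G.edgeSet \ (inducedOn G M).edgeSet) ∪ FM)) N' ∧
      N.ncard ≤ N'.ncard := by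
  classical
  have hGpE : (SimpleGraph.fromEdgeSet
      ((G.edgeSet \ (inducedOn G M).edgeSet) ∪ FM)).edgeSet
      = (G.edgeSet \ (inducedOn G M).edgeSet) ∪ FM := Gp_edgeSet G M hFM.1.1
  set N1 : Set (Sym2 V) := {e ∈ N | ∀ v ∈ e, v ∈ M} with hN1def
  set N3 : Set (Sym2 V) := {e ∈ N | ∀ v ∈ e, v ∉ M} with hN3def
  set N2 : Set (Sym2 V) := {e ∈ N | (∃ v ∈ e, v ∈ M) ∧ ∃ v ∈ e, v ∉ M} with hN2def
  -- representation of N2 edges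
  have hrep : ∀ e ∈ N2, ∃ a b : V, e = s(a, b) ∧ a ∈ M ∧ b ∉ M ∧ G.Adj a b := by
    intro e
    induction e using Sym2.ind with
    | _ x y =>
      rintro ⟨heN, ⟨a, ha, haM⟩, ⟨b, hb, hbM⟩⟩
      have hadj : G.Adj x y := hN.1 heN
      rw [Sym2.mem_iff] at ha hb
      rcases ha with rfl | rfl <;> rcases hb with rfl | rfl
      · exact absurd haM hbM
      · exact ⟨a, b, rfl, haM, hbM, hadj⟩
      · exact ⟨a, b, (Sym2.eq_swap), haM, hbM, hadj.symm⟩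
      · exact absurd haM hbM
  -- N1 is a matching of the induced graph
  have hN1match : IsMatching (inducedOn G M) N1 := by
    constructor
    · rintro e ⟨heN, hvM⟩
      exact mem_inducedOn_of (hN.1 heN) hvM
    · rintro e ⟨heN, -⟩ f ⟨hfN, -⟩ v hv hv'
      exact hN.2 e heN f hfN v hv hv'
  have hcard1 : N1.ncard ≤ FM.ncard := hFM.2 N1 hN1match
  obtain ⟨FM', hFM'sub, hFM'card⟩ := Set.exists_subset_card_eq hcard1
  set A : Set V := {v | ∃ e ∈ FM', v ∈ e} with hAdef
  set C : Set V := {v | ∃ e ∈ N1, v ∈ e} with hCdef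
  set B : Set V := {v ∈ M | ∃ e ∈ N2, v ∈ e} with hBdef
  have hAM : A ⊆ M := by
    rintro v ⟨e, he, hv⟩
    exact mem_M_of_inducedOn_edge (hFM.1.1 (hFM'sub he)) v hv
  have hCM : C ⊆ M := by
    rintro v ⟨e, he, hv⟩
    exact he.2 v hv
  have hA : A.ncard = 2 * FM'.ncard :=
    support_ncard FM'
      (fun e he => (inducedOn G M).not_isDiag_of_mem_edgeSet (hFM.1.1 (hFM'sub he)))
      (fun e he f hf v hv hv' => hFM.1.2 e (hFM'sub he) f (hFM'sub hf) v hv hv')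
  have hC : C.ncard = 2 * N1.ncard :=
    support_ncard N1
      (fun e he => G.not_isDiag_of_mem_edgeSet (hN.1 he.1))
      (fun e he f hf v hv hv' => hN.2 e he.1 f hf.1 v hv hv')
  have hBC : Disjoint B C := by
    rw [Set.disjoint_left]
    rintro v ⟨hvM, e2, he2, hve2⟩ ⟨e1, he1, hve1⟩
    have heq : e2 = e1 := hN.2 e2 he2.1 e1 he1.1 v hve2 hve1
    obtain ⟨a, b, he2eq, haM, hbM, -⟩ := hrep e2 he2
    exact hbM (he1.2 b (by rw [← heq, he2eq]; exact Sym2.mem_mk_right a b))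
  have hBCcard : B.ncard + C.ncard ≤ M.ncard := by
    rw [← Set.ncard_union_eq hBC (Set.toFinite _) (Set.toFinite _)]
    exact Set.ncard_le_ncard (Set.union_subset (fun v hv => hv.1) hCM) (Set.toFinite M)
  have hB_le : B.ncard ≤ (M \ A).ncard := by
    rw [Set.ncard_diff hAM (Set.toFinite _)]
    omega
  -- an injection from B into M \ A
  have hinjex : ∃ f : V → V, B ⊆ f ⁻¹' (M \ A) ∧ Set.InjOn f B := by
    rcases isEmpty_or_nonempty V with hV | hV
    · refine ⟨id, ?_, ?_⟩ <;> simp [Set.eq_empty_of_isEmpty B]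
    · apply Set.Finite.exists_injOn_of_encard_le (Set.toFinite B)
      rw [← (Set.toFinite B).cast_ncard_eq, ← (Set.toFinite (M \ A)).cast_ncard_eq]
      exact_mod_cast hB_le
  obtain ⟨f0, hf0pre, hf0inj⟩ := hinjex
  set φ : V → V := fun v => if v ∈ B then f0 v else v with hφdef
  have hφB : ∀ v ∈ B, φ v ∈ M \ A := by
    intro v hv
    simp only [hφdef, if_pos hv]
    exact hf0pre hv
  have hφinjB : Set.InjOn φ B := by
    intro x hx y hy h
    simp only [hφdef, if_pos hx, if_pos hy] at h
    exact hf0inj hx hy h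
  have hφnot : ∀ v ∉ B, φ v = v := by
    intro v hv
    simp only [hφdef, if_neg hv]
  -- the key representation of rerouted edges
  have hkey : ∀ e ∈ N2, ∃ a b : V, e = s(a, b) ∧ a ∈ B ∧ b ∉ M ∧
      Sym2.map φ e = s(φ a, b) ∧ G.Adj (φ a) b ∧ φ a ∈ M \ A := by
    intro e he
    obtain ⟨a, b, heq, haM, hbM, hadj⟩ := hrep e he
    have haB : a ∈ B := ⟨haM, e, he, by rw [heq]; exact Sym2.mem_mk_left a b⟩
    have hbB : b ∉ B := fun h => hbM h.1
    have hfa : φ a ∈ M \ A := hφB a haB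
    have hadj' : G.Adj (φ a) b := (hM a haM (φ a) hfa.1 b hbM).mp hadj
    refine ⟨a, b, heq, haB, hbM, ?_, hadj', hfa⟩
    rw [heq, Sym2.map_pair_eq, hφnot b hbB]
  set N2' : Set (Sym2 V) := (Sym2.map φ) '' N2 with hN2'def
  -- cross-type conflicts are impossible
  have hX1 : ∀ e ∈ N3, ∀ f ∈ FM', ∀ v : V, v ∈ e → v ∈ f → False := by
    intro e he f hf v hv hvf
    exact he.2 v hv (hAM ⟨f, hf, hvf⟩)
  have hX2 : ∀ e ∈ N3, ∀ f ∈ N2', ∀ v : V, v ∈ e → v ∈ f → False := by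
    rintro e he f ⟨e2, he2, rfl⟩ v hv hvf
    obtain ⟨a, b, he2eq, haB, hbM, hmap, -, hfa⟩ := hkey e2 he2
    rw [hmap, Sym2.mem_iff] at hvf
    rcases hvf with h | h
    · exact he.2 v hv (by rw [h]; exact hfa.1)
    · have heq : e = e2 := hN.2 e he.1 e2 he2.1 v hv
        (by rw [h, he2eq]; exact Sym2.mem_mk_right a b)
      exact he.2 a (by rw [heq, he2eq]; exact Sym2.mem_mk_left a b) haB.1
  have hX3 : ∀ e ∈ FM', ∀ f ∈ N2', ∀ v : V, v ∈ e → v ∈ f → False := by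
    rintro e he f ⟨e2, he2, rfl⟩ v hv hvf
    obtain ⟨a, b, he2eq, haB, hbM, hmap, -, hfa⟩ := hkey e2 he2
    rw [hmap, Sym2.mem_iff] at hvf
    rcases hvf with h | h
    · exact hfa.2 ⟨e, he, by rw [← h]; exact hv⟩
    · exact hbM (hAM ⟨e, he, by rw [← h]; exact hv⟩)
  -- the new matching
  have hN'sub : (N3 ∪ FM') ∪ N2'
      ⊆ (SimpleGraph.fromEdgeSet ((G.edgeSet \ (inducedOn G M).edgeSet) ∪ FM)).edgeSet := by
    rw [hGpE]
    rintro e ((he | he) | he)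
    · left
      refine ⟨hN.1 he.1, fun hmem => ?_⟩
      obtain ⟨v, hv⟩ := exists_mem_sym2 e
      exact he.2 v hv (mem_M_of_inducedOn_edge hmem v hv)
    · right; exact hFM'sub he
    · obtain ⟨e2, he2, rfl⟩ := he
      obtain ⟨a, b, he2eq, haB, hbM, hmap, hadj, hfa⟩ := hkey e2 he2
      left
      rw [hmap]
      exact ⟨G.mem_edgeSet.mpr hadj,
        fun hmem => hbM (mem_M_of_inducedOn_edge hmem b (Sym2.mem_mk_right _ _))⟩
  have hpair : ∀ e ∈ (N3 ∪ FM') ∪ N2', ∀ f ∈ (N3 ∪ FM') ∪ N2',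
      ∀ v : V, v ∈ e → v ∈ f → e = f := by
    rintro e ((he | he) | he) f ((hf | hf) | hf) v hve hvf
    · exact hN.2 e he.1 f hf.1 v hve hvf
    · exact (hX1 e he f hf v hve hvf).elim
    · exact (hX2 e he f hf v hve hvf).elim
    · exact (hX1 f hf e he v hvf hve).elim
    · exact hFM.1.2 e (hFM'sub he) f (hFM'sub hf) v hve hvf
    · exact (hX3 e he f hf v hve hvf).elim
    · exact (hX2 f hf e he v hvf hve).elim
    · exact (hX3 f hf e he v hvf hve).elim
    · obtain ⟨e2, he2, rfl⟩ := he
      obtain ⟨f2, hf2, rfl⟩ := hf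
      obtain ⟨a1, b1, he2eq, ha1, hb1, hm1, -, hfa1⟩ := hkey e2 he2
      obtain ⟨a2, b2, hf2eq, ha2, hb2, hm2, -, hfa2⟩ := hkey f2 hf2
      rw [hm1, Sym2.mem_iff] at hve
      rw [hm2, Sym2.mem_iff] at hvf
      have he2f2 : e2 = f2 := by
        rcases hve with h1 | h1 <;> rcases hvf with h2 | h2
        · have haa : a1 = a2 := hφinjB ha1 ha2 (h1.symm.trans h2)
          exact hN.2 e2 he2.1 f2 hf2.1 a1
            (by rw [he2eq]; exact Sym2.mem_mk_left a1 b1)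
            (by rw [hf2eq, haa]; exact Sym2.mem_mk_left a2 b2)
        · exact absurd (by rw [← h1.symm.trans h2]; exact hfa1.1 : b2 ∈ M) hb2
        · exact absurd (by rw [h1.symm.trans h2]; exact hfa2.1 : b1 ∈ M) hb1
        · exact hN.2 e2 he2.1 f2 hf2.1 b1
            (by rw [he2eq]; exact Sym2.mem_mk_right a1 b1)
            (by rw [hf2eq, h1.symm.trans h2]; exact Sym2.mem_mk_right a2 b2)
      rw [he2f2]
  -- injectivity of the rerouting map on N2
  have hinjmap : Set.InjOn (Sym2.map φ) N2 := by
    intro e2 he2 f2 hf2 hmape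
    obtain ⟨a1, b1, he2eq, ha1, hb1, hm1, -, hfa1⟩ := hkey e2 he2
    obtain ⟨a2, b2, hf2eq, ha2, hb2, hm2, -, hfa2⟩ := hkey f2 hf2
    rw [hm1, hm2, Sym2.eq_iff] at hmape
    rcases hmape with ⟨h1, h2⟩ | ⟨h1, h2⟩
    · have haa : a1 = a2 := hφinjB ha1 ha2 h1
      rw [he2eq, hf2eq, haa, h2]
    · exact absurd (h1 ▸ hfa1.1) hb2
  -- set-level disjointness
  have D1 : Disjoint N3 FM' := Set.disjoint_left.mpr (fun {e} he hf =>
    (exists_mem_sym2 e).elim fun v hv => hX1 e he e hf v hv hv)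
  have D2 : Disjoint N3 N2' := Set.disjoint_left.mpr (fun {e} he hf =>
    (exists_mem_sym2 e).elim fun v hv => hX2 e he e hf v hv hv)
  have D3 : Disjoint FM' N2' := Set.disjoint_left.mpr (fun {e} he hf =>
    (exists_mem_sym2 e).elim fun v hv => hX3 e he e hf v hv hv)
  have hc1 : ((N3 ∪ FM') ∪ N2').ncard = N3.ncard + FM'.ncard + N2'.ncard := by
    rw [Set.ncard_union_eq (Set.disjoint_union_left.mpr ⟨D2, D3⟩)
        (Set.toFinite _) (Set.toFinite _),
      Set.ncard_union_eq D1 (Set.toFinite _) (Set.toFinite _)]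
  have hc2 : N2'.ncard = N2.ncard := Set.ncard_image_of_injOn hinjmap
  -- partition of N
  have hNsplit : N = (N3 ∪ N1) ∪ N2 := by
    ext e
    constructor
    · intro he
      by_cases h1 : ∀ v ∈ e, v ∈ M
      · exact Or.inl (Or.inr ⟨he, h1⟩)
      · by_cases h3 : ∀ v ∈ e, v ∉ M
        · exact Or.inl (Or.inl ⟨he, h3⟩)
        · push_neg at h1 h3
          exact Or.inr ⟨he, h3, h1⟩
    · rintro ((⟨he, -⟩ | ⟨he, -⟩) | ⟨he, -⟩) <;> exact he
  have d13 : Disjoint N3 N1 := Set.disjoint_left.mpr (by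
    rintro e ⟨heN, hout⟩ ⟨-, hin⟩
    obtain ⟨v, hv⟩ := exists_mem_sym2 e
    exact hout v hv (hin v hv))
  have d2 : Disjoint (N3 ∪ N1) N2 := Set.disjoint_left.mpr (by
    rintro e (⟨-, hout⟩ | ⟨-, hin⟩) ⟨-, ⟨a, ha, haM⟩, ⟨b, hb, hbM⟩⟩
    · exact hout a ha haM
    · exact hbM (hin b hb))
  have hc3 : N.ncard = N3.ncard + N1.ncard + N2.ncard := by
    rw [hNsplit, Set.ncard_union_eq d2 (Set.toFinite _) (Set.toFinite _),
      Set.ncard_union_eq d13 (Set.toFinite _) (Set.toFinite _)]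
  exact ⟨(N3 ∪ FM') ∪ N2', ⟨hN'sub, hpair⟩, by omega⟩

end Aux

/-- Let `M` be a module of `G`, `E_M` the edge set of `G[M]`, and `F_M ⊆ E_M` a maximum
matching of `G[M]`. Let `G'_M = (V, (E ∖ E_M) ∪ F_M)`. Then every maximum matching of
`G'_M` is a maximum matching of `G`; in particular `μ(G'_M) = μ(G)`. -/
theorem max_matching_of_module_replacement {V : Type*} [Fintype V]
    (G : SimpleGraph V) (M : Set V) (hM : IsModule G M)
    (FM : Set (Sym2 V)) (hFM : IsMaximumMatching (inducedOn G M) FM) :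
    (∀ F : Set (Sym2 V),
      IsMaximumMatching
        (SimpleGraph.fromEdgeSet ((G.edgeSet \ (inducedOn G M).edgeSet) ∪ FM)) F →
      IsMaximumMatching G F) ∧
    matchNum (SimpleGraph.fromEdgeSet ((G.edgeSet \ (inducedOn G M).edgeSet) ∪ FM))
      = matchNum G := by
  classical
  set G' := SimpleGraph.fromEdgeSet ((G.edgeSet \ (inducedOn G M).edgeSet) ∪ FM) with hG'def
  have key : ∀ N : Set (Sym2 V), IsMatching G N →
      ∃ N' : Set (Sym2 V), IsMatching G' N' ∧ N.ncard ≤ N'.ncard :=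
    fun N hN => exists_matching_Gp hM hFM hN
  have hsub : ∀ F : Set (Sym2 V), IsMatching G' F → IsMatching G F := by
    intro F hF
    refine ⟨hF.1.trans ?_, hF.2⟩
    rw [hG'def, Gp_edgeSet G M hFM.1.1]
    rintro e (⟨h, -⟩ | h)
    · exact h
    · exact inducedOn_edgeSet_subset G M (hFM.1.1 h)
  have hbdd : ∀ H : SimpleGraph V,
      BddAbove {n | ∃ F : Set (Sym2 V), IsMatching H F ∧ F.ncard = n} := by
    intro H
    refine ⟨Nat.card (Sym2 V), ?_⟩
    rintro n ⟨F, -, rfl⟩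
    calc F.ncard ≤ (Set.univ : Set (Sym2 V)).ncard :=
          Set.ncard_le_ncard (Set.subset_univ F) (Set.toFinite _)
      _ = Nat.card (Sym2 V) := Set.ncard_univ _
  have hne : ∀ H : SimpleGraph V,
      Set.Nonempty {n | ∃ F : Set (Sym2 V), IsMatching H F ∧ F.ncard = n} :=
    fun H => ⟨0, ∅, ⟨Set.empty_subset _, by simp⟩, by simp⟩
  constructor
  · intro F hF
    refine ⟨hsub F hF.1, ?_⟩
    intro F' hF'
    obtain ⟨N', hN', hle⟩ := key F' hF'
    exact hle.trans (hF.2 N' hN')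
  · unfold matchNum
    apply le_antisymm
    · apply csSup_le (hne G')
      rintro n ⟨F, hF, rfl⟩
      exact le_csSup (hbdd G) ⟨F, hsub F hF, rfl⟩
    · apply csSup_le (hne G)
      rintro n ⟨F, hF, rfl⟩
      obtain ⟨N', hN', hle⟩ := key F hF
      exact hle.trans (le_csSup (hbdd G') ⟨N', hN', rfl⟩)
end

section
/- Let G = G1 ⊕ G2 be the join of two vertex-disjoint graphs G1 and G2, and let F1 and F2 be maximum matchings of G1 and G2 respectively. Then G has a maximum matching F such that every edge of F with both endpoints in V(G1) belongs to F1 and every edge of F with both endpoints in V(G2) belongs to F2 (all other edges of F have one endpoint in V(G1) and one endpoint in V(G2)). -/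
open SimpleGraph

lemma sym2_vset {V : Type*} (x y : V) :
    {v | v ∈ s(x, y)} = {x, y} := by
  ext v; simp [Sym2.mem_iff]

lemma sup_card {V : Type*} [Fintype V] :
    ∀ M : Set (Sym2 V), (∀ e ∈ M, ¬ e.IsDiag) →
      (∀ e ∈ M, ∀ f ∈ M, ∀ v : V, v ∈ e → v ∈ f → e = f) →
      {v | ∃ e ∈ M, v ∈ e}.ncard = 2 * M.ncard := by
  intro M
  refine Set.Finite.induction_on (motive := fun M _ => (∀ e ∈ M, ¬ e.IsDiag) →
      (∀ e ∈ M, ∀ f ∈ M, ∀ v : V, v ∈ e → v ∈ f → e = f) →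
      {v | ∃ e ∈ M, v ∈ e}.ncard = 2 * M.ncard) M (Set.toFinite M) (by simp) ?_
  intro e M' hem hfin ih hnd hd
  have hsplit : {v | ∃ f ∈ insert e M', v ∈ f}
      = {v | v ∈ e} ∪ {v | ∃ f ∈ M', v ∈ f} := by
    ext v; simp [Set.mem_insert_iff, or_and_right, exists_or]
  have hdisj : Disjoint {v | v ∈ e} {v | ∃ f ∈ M', v ∈ f} := by
    rw [Set.disjoint_left]
    rintro v hv ⟨f, hf, hvf⟩
    exact hem (hd e (Set.mem_insert _ _) f (Set.mem_insert_of_mem _ hf) v hv hvf ▸ hf)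
  have hcard_e : {v | v ∈ e}.ncard = 2 := by
    obtain ⟨x, y⟩ := e
    have hxy : x ≠ y := by
      intro h; exact hnd _ (Set.mem_insert _ _) (by simp [h, Sym2.isDiag_iff_proj_eq])
    rw [show (Quot.mk _ (x, y) : Sym2 V) = s(x,y) from rfl, sym2_vset x y,
      Set.ncard_pair hxy]
  rw [hsplit, Set.ncard_union_eq hdisj (Set.toFinite _) (Set.toFinite _), hcard_e,
    ih (fun f hf => hnd f (Set.mem_insert_of_mem _ hf))
      (fun f hf g hg v h1 h2 => hd f (Set.mem_insert_of_mem _ hf) g (Set.mem_insert_of_mem _ hg) v h1 h2),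
    Set.ncard_insert_of_notMem hem hfin]
  ring

/-- Let `G = G1 ⊕ G2` be the join of two vertex-disjoint graphs `G1` (on vertex set `S1`)
and `G2` (on vertex set `S2`), and let `F1`, `F2` be maximum matchings of `G1`, `G2`.
Then `G` has a maximum matching `F` such that every edge of `F` with both endpoints in
`S1` belongs to `F1`, every edge of `F` with both endpoints in `S2` belongs to `F2`,
and every other edge of `F` has one endpoint in `S1` and one endpoint in `S2`. -/
theorem join_max_matching {V : Type*} [Fintype V] (G G1 G2 : SimpleGraph V) (S1 S2 : Set V)
    (hdisj : Disjoint S1 S2) (hcover : S1 ∪ S2 = Set.univ)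
    (hG1 : ∀ u v : V, G1.Adj u v → u ∈ S1 ∧ v ∈ S1)
    (hG2 : ∀ u v : V, G2.Adj u v → u ∈ S2 ∧ v ∈ S2)
    (hG : ∀ u v : V, G.Adj u v ↔
      (G1.Adj u v ∨ G2.Adj u v ∨ (u ∈ S1 ∧ v ∈ S2) ∨ (u ∈ S2 ∧ v ∈ S1)))
    (F1 F2 : Set (Sym2 V))
    (hF1 : IsMaximumMatching G1 F1) (hF2 : IsMaximumMatching G2 F2) :
    ∃ F : Set (Sym2 V), IsMaximumMatching G F ∧
      (∀ e ∈ F, (∀ v ∈ e, v ∈ S1) → e ∈ F1) ∧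
      (∀ e ∈ F, (∀ v ∈ e, v ∈ S2) → e ∈ F2) ∧
      (∀ e ∈ F, e ∈ F1 ∨ e ∈ F2 ∨ ∃ a ∈ S1, ∃ b ∈ S2, e = s(a, b)) := by

  classical
  rcases isEmpty_or_nonempty V with hV | hV
  · refine ⟨∅, ⟨⟨Set.empty_subset _, by simp⟩, ?_⟩, by simp, by simp, by simp⟩
    intro F' _
    simp [Set.eq_empty_of_isEmpty F']
  -- some general facts
  have hG1le : G1 ≤ G := fun u v h => (hG u v).2 (Or.inl h)
  have hG2le : G2 ≤ G := fun u v h => (hG u v).2 (Or.inr (Or.inl h))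
  have hF1S1 : ∀ e ∈ F1, ∀ v ∈ e, v ∈ S1 := by
    intro e he v hv
    obtain ⟨x, y⟩ := e
    have hadj : G1.Adj x y := hF1.1.1 he
    rcases (Sym2.mem_iff.mp hv) with rfl | rfl
    exacts [(hG1 _ _ hadj).1, (hG1 _ _ hadj).2]
  have hF2S2 : ∀ e ∈ F2, ∀ v ∈ e, v ∈ S2 := by
    intro e he v hv
    obtain ⟨x, y⟩ := e
    have hadj : G2.Adj x y := hF2.1.1 he
    rcases (Sym2.mem_iff.mp hv) with rfl | rfl
    exacts [(hG2 _ _ hadj).1, (hG2 _ _ hadj).2]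
  -- obtain a maximum matching M of G
  have : Nonempty {F : Set (Sym2 V) // IsMatching G F} :=
    ⟨⟨∅, Set.empty_subset _, by simp⟩⟩
  obtain ⟨⟨M, hM⟩, hMmax⟩ :=
    Finite.exists_max (fun F : {F : Set (Sym2 V) // IsMatching G F} => F.1.ncard)
  -- split M into parts
  set M1 : Set (Sym2 V) := {e ∈ M | ∀ v ∈ e, v ∈ S1} with hM1def
  set M2 : Set (Sym2 V) := {e ∈ M | ∀ v ∈ e, v ∈ S2} with hM2def
  set C : Set (Sym2 V) := M \ (M1 ∪ M2) with hCdef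
  have hM1sub : M1 ⊆ M := fun e he => he.1
  have hM2sub : M2 ⊆ M := fun e he => he.1
  have hCsub : C ⊆ M := fun e he => he.1
  have hnachS : ∀ v : V, v ∉ S1 → v ∈ S2 := by
    intro v hv
    have := Set.mem_univ v
    rw [← hcover, Set.mem_union] at this
    exact this.resolve_left hv
  -- cross edges structure
  have hCex : ∀ e ∈ C, ∃ x y, e = s(x, y) ∧ x ∈ S1 ∧ y ∈ S2 := by
    intro e he
    obtain ⟨hem, hnot⟩ := he
    obtain ⟨x, y⟩ := e
    have hadj : G.Adj x y := hM.1 hem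
    have hxy : ∀ v ∈ s(x,y), v = x ∨ v = y := fun v hv => Sym2.mem_iff.mp hv
    rcases (hG x y).1 hadj with h1 | h2 | h3 | h4
    · exact absurd (Or.inl ⟨hem, fun v hv => by
        rcases Sym2.mem_iff.mp hv with rfl | rfl
        exacts [(hG1 _ _ h1).1, (hG1 _ _ h1).2]⟩) hnot
    · exact absurd (Or.inr ⟨hem, fun v hv => by
        rcases Sym2.mem_iff.mp hv with rfl | rfl
        exacts [(hG2 _ _ h2).1, (hG2 _ _ h2).2]⟩) hnot
    · exact ⟨x, y, rfl, h3.1, h3.2⟩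
    · exact ⟨y, x, Sym2.eq_swap, h4.2, h4.1⟩
  have hS12 : ∀ v : V, v ∈ S1 → v ∈ S2 → False :=
    fun v h1 h2 => Set.disjoint_left.mp hdisj h1 h2
  -- M1 is a matching of G1, M2 of G2
  have hM1mat : IsMatching G1 M1 := by
    constructor
    · intro e he
      obtain ⟨hem, hS⟩ := he
      obtain ⟨x, y⟩ := e
      have hadj : G.Adj x y := hM.1 hem
      have hx : x ∈ S1 := hS x (by simp)
      have hy : y ∈ S1 := hS y (by simp)
      rcases (hG x y).1 hadj with h1 | h2 | h3 | h4
      · exact h1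
      · exact absurd (hG2 _ _ h2).1 (fun h => hS12 x hx h)
      · exact absurd h3.2 (fun h => hS12 y hy h)
      · exact absurd h4.1 (fun h => hS12 x hx h)
    · exact fun e he f hf v h1 h2 => hM.2 e (hM1sub he) f (hM1sub hf) v h1 h2
  have hM2mat : IsMatching G2 M2 := by
    constructor
    · intro e he
      obtain ⟨hem, hS⟩ := he
      obtain ⟨x, y⟩ := e
      have hadj : G.Adj x y := hM.1 hem
      have hx : x ∈ S2 := hS x (by simp)
      have hy : y ∈ S2 := hS y (by simp)
      rcases (hG x y).1 hadj with h1 | h2 | h3 | h4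
      · exact absurd (hG1 _ _ h1).1 (fun h => hS12 x h hx)
      · exact h2
      · exact absurd h3.1 (fun h => hS12 x h hx)
      · exact absurd h4.2 (fun h => hS12 y h hy)
    · exact fun e he f hf v h1 h2 => hM.2 e (hM2sub he) f (hM2sub hf) v h1 h2
  have ha_le : M1.ncard ≤ F1.ncard := hF1.2 M1 hM1mat
  have hb_le : M2.ncard ≤ F2.ncard := hF2.2 M2 hM2mat
  obtain ⟨A, hAF1, hAcard⟩ := Set.exists_subset_card_eq ha_le
  obtain ⟨B, hBF2, hBcard⟩ := Set.exists_subset_card_eq hb_le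
  -- supports
  set supA : Set V := {v | ∃ e ∈ A, v ∈ e} with hsupAdef
  set supB : Set V := {v | ∃ e ∈ B, v ∈ e} with hsupBdef
  set supM1 : Set V := {v | ∃ e ∈ M1, v ∈ e} with hsupM1def
  set supM2 : Set V := {v | ∃ e ∈ M2, v ∈ e} with hsupM2def
  have hsupAcard : supA.ncard = 2 * M1.ncard := by
    rw [hsupAdef, sup_card A
      (fun e he => G1.not_isDiag_of_mem_edgeSet (hF1.1.1 (hAF1 he)))
      (fun e he f hf v h1 h2 => hF1.1.2 e (hAF1 he) f (hAF1 hf) v h1 h2), hAcard]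
  have hsupBcard : supB.ncard = 2 * M2.ncard := by
    rw [hsupBdef, sup_card B
      (fun e he => G2.not_isDiag_of_mem_edgeSet (hF2.1.1 (hBF2 he)))
      (fun e he f hf v h1 h2 => hF2.1.2 e (hBF2 he) f (hBF2 hf) v h1 h2), hBcard]
  have hsupM1card : supM1.ncard = 2 * M1.ncard := by
    rw [hsupM1def, sup_card M1
      (fun e he => G1.not_isDiag_of_mem_edgeSet (hM1mat.1 he)) hM1mat.2]
  have hsupM2card : supM2.ncard = 2 * M2.ncard := by
    rw [hsupM2def, sup_card M2
      (fun e he => G2.not_isDiag_of_mem_edgeSet (hM2mat.1 he)) hM2mat.2]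
  have hsupAsub : supA ⊆ S1 := by
    rintro v ⟨e, he, hv⟩; exact hF1S1 e (hAF1 he) v hv
  have hsupBsub : supB ⊆ S2 := by
    rintro v ⟨e, he, hv⟩; exact hF2S2 e (hBF2 he) v hv
  have hsupM1sub : supM1 ⊆ S1 := by
    rintro v ⟨e, he, hv⟩; exact he.2 v hv
  have hsupM2sub : supM2 ⊆ S2 := by
    rintro v ⟨e, he, hv⟩; exact he.2 v hv
  -- injections from C into unmatched vertices
  choose gx gy hgspec using hCex
  set px : Sym2 V → V := fun e =>
    if h : e ∈ C then gx e h else Classical.arbitrary V with hpxdef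
  set py : Sym2 V → V := fun e =>
    if h : e ∈ C then gy e h else Classical.arbitrary V with hpydef
  have hpx : ∀ e (h : e ∈ C), px e ∈ e ∧ px e ∈ S1 := by
    intro e h
    simp only [hpxdef, dif_pos h]
    obtain ⟨heq, h1, h2⟩ := hgspec e h
    have hmem : gx e h ∈ s(gx e h, gy e h) := Sym2.mem_mk_left _ _
    rw [← heq] at hmem
    exact ⟨hmem, h1⟩
  have hpy : ∀ e (h : e ∈ C), py e ∈ e ∧ py e ∈ S2 := by
    intro e h
    simp only [hpydef, dif_pos h]
    obtain ⟨heq, h1, h2⟩ := hgspec e h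
    have hmem : gy e h ∈ s(gx e h, gy e h) := Sym2.mem_mk_right _ _
    rw [← heq] at hmem
    exact ⟨hmem, h2⟩
  have hCne : ∀ e ∈ C, e ∉ M1 ∧ e ∉ M2 := by
    intro e he
    exact ⟨fun h => he.2 (Or.inl h), fun h => he.2 (Or.inr h)⟩
  have hc1 : C.ncard ≤ (S1 \ supM1).ncard := by
    apply Set.ncard_le_ncard_of_injOn px ?_ ?_ (Set.toFinite _)
    · intro e he
      refine ⟨(hpx e he).2, ?_⟩
      rintro ⟨f, hf, hvf⟩
      exact (hCne e he).1
        ((hM.2 e (hCsub he) f (hM1sub hf) (px e) (hpx e he).1 hvf) ▸ hf)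
    · intro e he f hf hpq
      exact hM.2 e (hCsub he) f (hCsub hf) (px e) (hpx e he).1 (hpq ▸ (hpx f hf).1)
  have hc2 : C.ncard ≤ (S2 \ supM2).ncard := by
    apply Set.ncard_le_ncard_of_injOn py ?_ ?_ (Set.toFinite _)
    · intro e he
      refine ⟨(hpy e he).2, ?_⟩
      rintro ⟨f, hf, hvf⟩
      exact (hCne e he).2
        ((hM.2 e (hCsub he) f (hM2sub hf) (py e) (hpy e he).1 hvf) ▸ hf)
    · intro e he f hf hpq
      exact hM.2 e (hCsub he) f (hCsub hf) (py e) (hpy e he).1 (hpq ▸ (hpy f hf).1)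
  have hd1 : (S1 \ supA).ncard = (S1 \ supM1).ncard := by
    rw [Set.ncard_diff hsupAsub, Set.ncard_diff hsupM1sub, hsupAcard, hsupM1card]
  have hd2 : (S2 \ supB).ncard = (S2 \ supM2).ncard := by
    rw [Set.ncard_diff hsupBsub, Set.ncard_diff hsupM2sub, hsupBcard, hsupM2card]
  obtain ⟨T1, hT1sub, hT1card⟩ := Set.exists_subset_card_eq (hd1 ▸ hc1)
  obtain ⟨T2, hT2sub, hT2card⟩ := Set.exists_subset_card_eq (hd2 ▸ hc2)
  have henc : T1.encard = T2.encard := by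
    rw [← Set.Finite.cast_ncard_eq (Set.toFinite T1),
      ← Set.Finite.cast_ncard_eq (Set.toFinite T2), hT1card, hT2card]
  obtain ⟨f, hfbij⟩ := Set.Finite.exists_bijOn_of_encard_eq (Set.toFinite T1) henc
  -- decomposition of M's cardinality
  have hM12 : Disjoint M1 M2 := by
    rw [Set.disjoint_left]
    intro e h1 h2
    obtain ⟨x, y⟩ := e
    exact hS12 x (h1.2 x (Sym2.mem_mk_left _ _)) (h2.2 x (Sym2.mem_mk_left _ _))
  have hMsplit : M = (M1 ∪ M2) ∪ C := by
    ext e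
    constructor
    · intro he
      by_cases h : e ∈ M1 ∪ M2
      · exact Or.inl h
      · exact Or.inr ⟨he, h⟩
    · rintro (h | h)
      · exact h.elim (fun h' => hM1sub h') (fun h' => hM2sub h')
      · exact h.1
  have hMcard : M.ncard = M1.ncard + M2.ncard + C.ncard := by
    rw [hMsplit, Set.ncard_union_eq Set.disjoint_sdiff_right (Set.toFinite _) (Set.toFinite _),
      Set.ncard_union_eq hM12 (Set.toFinite _) (Set.toFinite _)]
  -- the new matching
  set X : Set (Sym2 V) := (fun x => s(x, f x)) '' T1 with hXdef
  have hXmem : ∀ e ∈ X, ∃ x ∈ T1, e = s(x, f x) := by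
    rintro e ⟨x, hx, rfl⟩; exact ⟨x, hx, rfl⟩
  have hT1S : ∀ x ∈ T1, x ∈ S1 ∧ x ∉ supA := fun x hx => ⟨(hT1sub hx).1, (hT1sub hx).2⟩
  have hT2S : ∀ x ∈ T2, x ∈ S2 ∧ x ∉ supB := fun x hx => ⟨(hT2sub hx).1, (hT2sub hx).2⟩
  have hfT2 : ∀ x ∈ T1, f x ∈ S2 ∧ f x ∉ supB := fun x hx => hT2S _ (hfbij.mapsTo hx)
  have hAS1 : ∀ e ∈ A, ∀ v ∈ e, v ∈ S1 := fun e he v hv => hF1S1 e (hAF1 he) v hv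
  have hBS2 : ∀ e ∈ B, ∀ v ∈ e, v ∈ S2 := fun e he v hv => hF2S2 e (hBF2 he) v hv
  set F : Set (Sym2 V) := (A ∪ B) ∪ X with hFdef
  -- X's edges have card C.ncard
  have hXinj : Set.InjOn (fun x => s(x, f x)) T1 := by
    intro x hx y hy hxy
    simp only [Sym2.eq_iff] at hxy
    rcases hxy with ⟨h1, h2⟩ | ⟨h1, h2⟩
    · exact h1
    · exact absurd (hfT2 y hy).1 (fun h => hS12 x (hT1S x hx).1 (h1 ▸ h))
  have hXcard : X.ncard = C.ncard := by
    rw [hXdef, Set.ncard_image_of_injOn hXinj, hT1card]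
  -- disjointness of the three parts
  have hABdisj : Disjoint A B := by
    rw [Set.disjoint_left]
    intro e h1 h2
    obtain ⟨x, y⟩ := e
    exact hS12 x (hAS1 _ h1 x (Sym2.mem_mk_left _ _)) (hBS2 _ h2 x (Sym2.mem_mk_left _ _))
  have hABXdisj : Disjoint (A ∪ B) X := by
    rw [Set.disjoint_left]
    rintro e h1 ⟨x, hx, rfl⟩
    rcases h1 with h | h
    · exact hS12 (f x) (hAS1 _ h (f x) (Sym2.mem_mk_right _ _)) (hfT2 x hx).1
    · exact hS12 x (hT1S x hx).1 (hBS2 _ h x (Sym2.mem_mk_left _ _))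
  have hFcard : F.ncard = M.ncard := by
    rw [hFdef, Set.ncard_union_eq hABXdisj (Set.toFinite _) (Set.toFinite _),
      Set.ncard_union_eq hABdisj (Set.toFinite _) (Set.toFinite _),
      hAcard, hBcard, hXcard, hMcard]
  -- F is a matching of G
  have hFedge : F ⊆ G.edgeSet := by
    rintro e ((h | h) | h)
    · exact SimpleGraph.edgeSet_mono hG1le (hF1.1.1 (hAF1 h))
    · exact SimpleGraph.edgeSet_mono hG2le (hF2.1.1 (hBF2 h))
    · obtain ⟨x, hx, rfl⟩ := hXmem _ h
      rw [SimpleGraph.mem_edgeSet]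
      exact (hG x (f x)).2 (Or.inr (Or.inr (Or.inl ⟨(hT1S x hx).1, (hfT2 x hx).1⟩)))
  have hFdisj : ∀ e ∈ F, ∀ f' ∈ F, ∀ v : V, v ∈ e → v ∈ f' → e = f' := by
    have hXvert : ∀ e ∈ X, ∀ v ∈ e, (∃ x ∈ T1, v = x ∧ e = s(x, f x)) ∨
        (∃ x ∈ T1, v = f x ∧ e = s(x, f x)) := by
      rintro e ⟨x, hx, rfl⟩ v hv
      rcases Sym2.mem_iff.mp hv with h | h
      · exact Or.inl ⟨x, hx, h, rfl⟩
      · exact Or.inr ⟨x, hx, h, rfl⟩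
    have hvA : ∀ e ∈ A, ∀ v ∈ e, v ∈ supA := fun e he v hv => ⟨e, he, hv⟩
    have hvB : ∀ e ∈ B, ∀ v ∈ e, v ∈ supB := fun e he v hv => ⟨e, he, hv⟩
    have hXA : ∀ e ∈ X, ∀ e' ∈ A, ∀ v, v ∈ e → v ∈ e' → False := by
      intro e he e' he' v hv hv'
      rcases hXvert e he v hv with ⟨x, hx, hvx, he2⟩ | ⟨x, hx, hvx, he2⟩
      · exact (hT1S x hx).2 (hvA e' he' x (hvx ▸ hv'))
      · exact hS12 (f x) (hAS1 e' he' (f x) (hvx ▸ hv')) (hfT2 x hx).1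
    have hXB : ∀ e ∈ X, ∀ e' ∈ B, ∀ v, v ∈ e → v ∈ e' → False := by
      intro e he e' he' v hv hv'
      rcases hXvert e he v hv with ⟨x, hx, hvx, he2⟩ | ⟨x, hx, hvx, he2⟩
      · exact hS12 x (hT1S x hx).1 (hBS2 e' he' x (hvx ▸ hv'))
      · exact (hfT2 x hx).2 (hvB e' he' (f x) (hvx ▸ hv'))
    have hAB : ∀ e ∈ A, ∀ e' ∈ B, ∀ v, v ∈ e → v ∈ e' → False := by
      intro e he e' he' v hv hv'
      exact hS12 v (hAS1 e he v hv) (hBS2 e' he' v hv')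
    rintro e (he | he) f' (hf' | hf') v hv hv'
    · rcases he with he | he <;> rcases hf' with hf' | hf'
      · exact hF1.1.2 e (hAF1 he) f' (hAF1 hf') v hv hv'
      · exact (hAB e he f' hf' v hv hv').elim
      · exact (hAB f' hf' e he v hv' hv).elim
      · exact hF2.1.2 e (hBF2 he) f' (hBF2 hf') v hv hv'
    · rcases he with he | he
      · exact (hXA f' hf' e he v hv' hv).elim
      · exact (hXB f' hf' e he v hv' hv).elim
    · rcases hf' with hf' | hf'
      · exact (hXA e he f' hf' v hv hv').elim
      · exact (hXB e he f' hf' v hv hv').elim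
    · rcases hXvert e he v hv with ⟨x, hx, hvx, he2⟩ | ⟨x, hx, hvx, he2⟩ <;>
        rcases hXvert f' hf' v hv' with ⟨y, hy, hvy, hf2⟩ | ⟨y, hy, hvy, hf2⟩
      · rw [he2, hf2, hvx.symm.trans hvy]
      · exact absurd (show x ∈ S2 by
          rw [hvx.symm.trans hvy]; exact (hfT2 y hy).1)
          (fun h => hS12 x (hT1S x hx).1 h)
      · exact absurd (show y ∈ S2 by
          rw [hvy.symm.trans hvx]; exact (hfT2 x hx).1)
          (fun h => hS12 y (hT1S y hy).1 h)
      · rw [he2, hf2, hfbij.injOn hx hy (hvx.symm.trans hvy)]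
  refine ⟨F, ⟨⟨hFedge, hFdisj⟩, ?_⟩, ?_, ?_, ?_⟩
  · intro F' hF'
    exact (hMmax ⟨F', hF'⟩).trans hFcard.ge
  · rintro e ((he | he) | he) hS
    · exact hAF1 he
    · exfalso
      obtain ⟨x, y⟩ := e
      exact hS12 x (hS x (Sym2.mem_mk_left _ _)) (hBS2 _ he x (Sym2.mem_mk_left _ _))
    · exfalso
      obtain ⟨x, hx, rfl⟩ := hXmem _ he
      exact hS12 (f x) (hS (f x) (Sym2.mem_mk_right _ _)) (hfT2 x hx).1
  · rintro e ((he | he) | he) hS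
    · exfalso
      obtain ⟨x, y⟩ := e
      exact hS12 x (hAS1 _ he x (Sym2.mem_mk_left _ _)) (hS x (Sym2.mem_mk_left _ _))
    · exact hBF2 he
    · exfalso
      obtain ⟨x, hx, rfl⟩ := hXmem _ he
      exact hS12 x (hT1S x hx).1 (hS x (Sym2.mem_mk_left _ _))
  · rintro e ((he | he) | he)
    · exact Or.inl (hAF1 he)
    · exact Or.inr (Or.inl (hBF2 he))
    · obtain ⟨x, hx, rfl⟩ := hXmem _ he
      exact Or.inr (Or.inr ⟨x, (hT1S x hx).1, f x, (hfT2 x hx).1, rfl⟩)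
end

section
/- Let G = (V, E) be a graph and let v and v' be two distinct one-vertex extensions of G that are not twins of each other. Then v' is a one-vertex extension of the graph G − v obtained by deleting v. -/
open SimpleGraph

/-- A one-vertex extension: a vertex that is universal, isolated, anti-pendant, pendant,
a true twin, or a false twin. -/
def OneVertexExtension {V : Type*} (G : SimpleGraph V) (v : V) : Prop :=
  (insert v (G.neighborSet v) = Set.univ) ∨
  (G.neighborSet v = ∅) ∨
  (∃ u, u ≠ v ∧ insert v (G.neighborSet v) = {u}ᶜ) ∨
  (∃ u, u ≠ v ∧ G.neighborSet v = {u}) ∨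
  (∃ u, u ≠ v ∧ insert v (G.neighborSet v) = insert u (G.neighborSet u)) ∨
  (∃ u, u ≠ v ∧ G.neighborSet v = G.neighborSet u)

/-- Two distinct vertices are twins if `N[u] = N[v]` or `N(u) = N(v)`. -/
def AreTwins {V : Type*} (G : SimpleGraph V) (u v : V) : Prop :=
  u ≠ v ∧ (insert u (G.neighborSet u) = insert v (G.neighborSet v) ∨
    G.neighborSet u = G.neighborSet v)

/-- If `v` and `v'` are two distinct one-vertex extensions of `G` that are not twins of
each other, then `v'` is a one-vertex extension of `G − v`. -/
theorem oneVertexExtension_of_delete {V : Type*} [Fintype V] (G : SimpleGraph V)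
    (v v' : V) (hne : v ≠ v')
    (hv : OneVertexExtension G v) (hv' : OneVertexExtension G v')
    (hnt : ¬AreTwins G v v') :
    OneVertexExtension (G.induce {u : V | u ≠ v}) ⟨v', hne.symm⟩ := by
  rcases hv' with h | h | ⟨u, hu, h⟩ | ⟨u, hu, h⟩ | ⟨u, hu, h⟩ | ⟨u, hu, h⟩
  · left
    ext ⟨w, hw⟩
    have hm := Set.ext_iff.mp h w
    simp [Subtype.ext_iff] at hm ⊢
    tauto
  · right; left
    ext ⟨w, hw⟩
    have hm := Set.ext_iff.mp h w
    simp at hm ⊢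
    tauto
  · by_cases huv : u = v
    · subst huv
      left
      ext ⟨w, hw⟩
      have hm := Set.ext_iff.mp h w
      simp at hw
      simp [Subtype.ext_iff] at hm ⊢
      tauto
    · right; right; left
      refine ⟨⟨u, huv⟩, by simp [Subtype.ext_iff, hu], ?_⟩
      ext ⟨w, hw⟩
      have hm := Set.ext_iff.mp h w
      simp [Subtype.ext_iff] at hm ⊢
      tauto
  · by_cases huv : u = v
    · subst huv
      right; left
      ext ⟨w, hw⟩
      have hm := Set.ext_iff.mp h w
      simp at hw
      simp [Subtype.ext_iff] at hm ⊢
      tauto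
    · right; right; right; left
      refine ⟨⟨u, huv⟩, by simp [Subtype.ext_iff, hu], ?_⟩
      ext ⟨w, hw⟩
      have hm := Set.ext_iff.mp h w
      simp [Subtype.ext_iff] at hm ⊢
      tauto
  · by_cases huv : u = v
    · subst huv
      exact absurd ⟨hne, Or.inl h.symm⟩ hnt
    · right; right; right; right; left
      refine ⟨⟨u, huv⟩, by simp [Subtype.ext_iff, hu], ?_⟩
      ext ⟨w, hw⟩
      have hm := Set.ext_iff.mp h w
      simp [Subtype.ext_iff] at hm ⊢
      tauto
  · by_cases huv : u = v
    · subst huv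
      exact absurd ⟨hne, Or.inr h.symm⟩ hnt
    · right; right; right; right; right
      refine ⟨⟨u, huv⟩, by simp [Subtype.ext_iff, hu], ?_⟩
      ext ⟨w, hw⟩
      have hm := Set.ext_iff.mp h w
      simp [Subtype.ext_iff] at hm ⊢
      tauto
end

section
/- Every graph G = (V, E) has a unique pruned subgraph up to isomorphism: if H1 and H2 are both pruned subgraphs of G, then H1 and H2 are isomorphic. -/
open SimpleGraph

def AmbOVE {V : Type*} (G : SimpleGraph V) (S : Set V) (v : V) : Prop :=
  (∀ x ∈ S, x = v ∨ G.Adj v x) ∨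
  (∀ x ∈ S, ¬ G.Adj v x) ∨
  (∃ u ∈ S, u ≠ v ∧ ∀ x ∈ S, ((x = v ∨ G.Adj v x) ↔ x ≠ u)) ∨
  (∃ u ∈ S, u ≠ v ∧ ∀ x ∈ S, (G.Adj v x ↔ x = u)) ∨
  (∃ u ∈ S, u ≠ v ∧ ∀ x ∈ S, ((x = v ∨ G.Adj v x) ↔ (x = u ∨ G.Adj u x))) ∨
  (∃ u ∈ S, u ≠ v ∧ ∀ x ∈ S, (G.Adj v x ↔ G.Adj u x))

lemma ove_iff {V : Type*} (G : SimpleGraph V) {S : Set V} {v : V} (hv : v ∈ S) :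
    OneVertexExtension (G.induce S) ⟨v, hv⟩ ↔ AmbOVE G S v := by
  unfold OneVertexExtension AmbOVE
  refine or_congr ?_ (or_congr ?_ (or_congr ?_ (or_congr ?_ (or_congr ?_ ?_)))) <;>
    (simp only [Set.ext_iff, Set.mem_insert_iff, mem_neighborSet, comap_adj,
      Function.Embedding.coe_subtype, Set.mem_univ, iff_true,
      Set.mem_empty_iff_false, iff_false, Set.mem_compl_iff,
      Set.mem_singleton_iff, Subtype.forall, Subtype.ext_iff, Subtype.exists,
      ne_eq, Subtype.mk.injEq]) <;> tauto

lemma ambove_persist {V : Type*} (G : SimpleGraph V) {S : Set V} {v w : V}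
    (hvw : v ≠ w) (h : AmbOVE G S v) :
    AmbOVE G (S \ {w}) v ∨ (∀ z ∈ S, z ≠ v → z ≠ w → (G.Adj v z ↔ G.Adj w z)) := by
  obtain h | h | ⟨u, hu, huv, h⟩ | ⟨u, hu, huv, h⟩ | ⟨u, hu, huv, h⟩ | ⟨u, hu, huv, h⟩ := h
  · exact Or.inl (Or.inl fun x hx => h x hx.1)
  · exact Or.inl (Or.inr (Or.inl fun x hx => h x hx.1))
  · rcases eq_or_ne u w with rfl | hne
    · exact Or.inl (Or.inl fun x hx => (h x hx.1).mpr hx.2)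
    · exact Or.inl <| Or.inr <| Or.inr <| Or.inl
        ⟨u, ⟨hu, hne⟩, huv, fun x hx => h x hx.1⟩
  · rcases eq_or_ne u w with rfl | hne
    · exact Or.inl <| Or.inr <| Or.inl fun x hx hadj => hx.2 ((h x hx.1).mp hadj)
    · exact Or.inl <| Or.inr <| Or.inr <| Or.inr <| Or.inl
        ⟨u, ⟨hu, hne⟩, huv, fun x hx => h x hx.1⟩
  · rcases eq_or_ne u w with rfl | hne
    · refine Or.inr fun z hz hzv hzw => ?_
      have hiff := h z hz
      constructor
      · intro ha
        rcases hiff.mp (Or.inr ha) with h' | h'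
        · exact absurd h' hzw
        · exact h'
      · intro ha
        rcases hiff.mpr (Or.inr ha) with h' | h'
        · exact absurd h' hzv
        · exact h'
    · exact Or.inl <| Or.inr <| Or.inr <| Or.inr <| Or.inr <| Or.inl
        ⟨u, ⟨hu, hne⟩, huv, fun x hx => h x hx.1⟩
  · rcases eq_or_ne u w with rfl | hne
    · exact Or.inr fun z hz _ _ => h z hz
    · exact Or.inl <| Or.inr <| Or.inr <| Or.inr <| Or.inr <| Or.inr
        ⟨u, ⟨hu, hne⟩, huv, fun x hx => h x hx.1⟩

section Swap
variable {V : Type*} [DecidableEq V] {G : SimpleGraph V} {A : Set V} {v w : V}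

lemma swap_mem_of_mem (hv : v ∈ A) (hw : w ∈ A) {x : V} (hx : x ∈ A) :
    Equiv.swap v w x ∈ A := by
  rcases eq_or_ne x v with rfl | hxv
  · rwa [Equiv.swap_apply_left]
  rcases eq_or_ne x w with rfl | hxw
  · rwa [Equiv.swap_apply_right]
  · rwa [Equiv.swap_apply_of_ne_of_ne hxv hxw]

lemma swap_adj_of_twins (hv : v ∈ A) (hw : w ∈ A)
    (tw : ∀ z ∈ A, z ≠ v → z ≠ w → (G.Adj v z ↔ G.Adj w z)) :
    ∀ x ∈ A, ∀ y ∈ A, (G.Adj (Equiv.swap v w x) (Equiv.swap v w y) ↔ G.Adj x y) := by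
  have key : ∀ x ∈ A, ∀ y ∈ A, G.Adj x y → G.Adj (Equiv.swap v w x) (Equiv.swap v w y) := by
    intro x hx y hy hxy
    rcases eq_or_ne x v with h | hxv
    · rw [h] at hxy ⊢
      rw [Equiv.swap_apply_left]
      rcases eq_or_ne y v with h' | hyv
      · rw [h'] at hxy; exact absurd hxy (G.irrefl)
      rcases eq_or_ne y w with h' | hyw
      · rw [h'] at hxy ⊢; rw [Equiv.swap_apply_right]; exact hxy.symm
      · rw [Equiv.swap_apply_of_ne_of_ne hyv hyw]
        exact (tw y hy hyv hyw).mp hxy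
    rcases eq_or_ne x w with h | hxw
    · rw [h] at hxy ⊢
      rw [Equiv.swap_apply_right]
      rcases eq_or_ne y v with h' | hyv
      · rw [h'] at hxy ⊢; rw [Equiv.swap_apply_left]; exact hxy.symm
      rcases eq_or_ne y w with h' | hyw
      · rw [h'] at hxy; exact absurd hxy (G.irrefl)
      · rw [Equiv.swap_apply_of_ne_of_ne hyv hyw]
        exact (tw y hy hyv hyw).mpr hxy
    · rw [Equiv.swap_apply_of_ne_of_ne hxv hxw]
      rcases eq_or_ne y v with h' | hyv
      · rw [h'] at hxy ⊢; rw [Equiv.swap_apply_left]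
        exact ((tw x hx hxv hxw).mp hxy.symm).symm
      rcases eq_or_ne y w with h' | hyw
      · rw [h'] at hxy ⊢; rw [Equiv.swap_apply_right]
        exact ((tw x hx hxv hxw).mpr hxy.symm).symm
      · rwa [Equiv.swap_apply_of_ne_of_ne hyv hyw]
  intro x hx y hy
  refine ⟨fun h => ?_, key x hx y hy⟩
  have := key _ (swap_mem_of_mem hv hw hx) _ (swap_mem_of_mem hv hw hy) h
  simpa using this

end Swap

section Iso
variable {W W' : Type*} {H : SimpleGraph W} {H' : SimpleGraph W'}

lemma neighborSet_image (e : H ≃g H') (v : W) :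
    ⇑e '' H.neighborSet v = H'.neighborSet (e v) := by
  ext x
  constructor
  · rintro ⟨y, hy, rfl⟩
    exact e.map_adj_iff.mpr hy
  · intro hx
    refine ⟨e.symm x, ?_, e.apply_symm_apply x⟩
    have : H'.Adj (e v) (e (e.symm x)) := by rwa [e.apply_symm_apply]
    exact e.map_adj_iff.mp this

lemma ove_map (e : H ≃g H') {v : W} (h : OneVertexExtension H v) :
    OneVertexExtension H' (e v) := by
  have himg : ∀ u : W, ⇑e '' insert u (H.neighborSet u)
      = insert (e u) (H'.neighborSet (e u)) := by
    intro u; rw [Set.image_insert_eq, neighborSet_image]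
  have hinj : Function.Injective ⇑e := e.toEquiv.injective
  have hbij : Function.Bijective ⇑e := e.toEquiv.bijective
  obtain h | h | ⟨u, hu, h⟩ | ⟨u, hu, h⟩ | ⟨u, hu, h⟩ | ⟨u, hu, h⟩ := h
  · left
    rw [← himg, h, Set.image_univ]
    exact e.toEquiv.range_eq_univ
  · right; left
    rw [← neighborSet_image e, h, Set.image_empty]
  · right; right; left
    refine ⟨e u, hinj.ne hu, ?_⟩
    rw [← himg, h, Set.image_compl_eq hbij, Set.image_singleton]
  · right; right; right; left
    refine ⟨e u, hinj.ne hu, ?_⟩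
    rw [← neighborSet_image e, h, Set.image_singleton]
  · right; right; right; right; left
    refine ⟨e u, hinj.ne hu, ?_⟩
    rw [← himg, h, himg]
  · right; right; right; right; right
    refine ⟨e u, hinj.ne hu, ?_⟩
    rw [← neighborSet_image e, h, neighborSet_image]

end Iso

section Move
variable {V : Type*} {G : SimpleGraph V}

/-- The equivalence between a set and its image under an `Equiv`. -/
def setImageEquiv (π : V ≃ V) (T : Set V) : T ≃ (⇑π '' T : Set V) where
  toFun x := ⟨π x, ⟨x, x.2, rfl⟩⟩
  invFun y := ⟨π.symm y, by
    obtain ⟨x, hx, he⟩ := y.2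
    rw [← he, Equiv.symm_apply_apply]; exact hx⟩
  left_inv x := Subtype.ext (by simp)
  right_inv y := Subtype.ext (by simp)

/-- Moving an induced subgraph along a compatible ambient permutation. -/
def moveIso (π : V ≃ V) {A T : Set V}
    (hadj : ∀ x ∈ A, ∀ y ∈ A, (G.Adj (π x) (π y) ↔ G.Adj x y))
    (hT : T ⊆ A) : G.induce T ≃g G.induce (⇑π '' T) where
  toEquiv := setImageEquiv π T
  map_rel_iff' := by
    intro a b
    simp only [setImageEquiv, Equiv.coe_fn_mk, comap_adj, Function.Embedding.coe_subtype]
    exact hadj a (hT a.2) b (hT b.2)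

end Move

def PruneStep {V : Type*} (G : SimpleGraph V) (S T : Set V) : Prop :=
  ∃ (v : V) (h : v ∈ S), OneVertexExtension (G.induce S) ⟨v, h⟩ ∧ T = S \ {v}

def IsPrunedSet {V : Type*} (G : SimpleGraph V) (S : Set V) : Prop :=
  Relation.ReflTransGen (PruneStep G) Set.univ S ∧
  ∀ w : S, ¬OneVertexExtension (G.induce S) w

section Main
variable {V : Type*} {G : SimpleGraph V}

lemma pruneStep_subset {S T : Set V} (h : PruneStep G S T) : T ⊆ S := by
  obtain ⟨v, hv, _, rfl⟩ := h; exact Set.diff_subset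

lemma rtg_subset {S T : Set V} (h : Relation.ReflTransGen (PruneStep G) S T) : T ⊆ S := by
  induction h with
  | refl => exact subset_rfl
  | tail _ hbc ih => exact (pruneStep_subset hbc).trans ih

lemma pruneStep_map (π : V ≃ V) {A : Set V}
    (hadj : ∀ x ∈ A, ∀ y ∈ A, (G.Adj (π x) (π y) ↔ G.Adj x y))
    {T T' : Set V} (hT : T ⊆ A) (h : PruneStep G T T') :
    PruneStep G (⇑π '' T) (⇑π '' T') := by
  obtain ⟨v, hv, hove, rfl⟩ := h
  refine ⟨π v, ⟨v, hv, rfl⟩, ?_, ?_⟩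
  · exact ove_map (moveIso π hadj hT) hove
  · rw [Set.image_diff π.injective, Set.image_singleton]

lemma rtg_map (π : V ≃ V) {A : Set V}
    (hadj : ∀ x ∈ A, ∀ y ∈ A, (G.Adj (π x) (π y) ↔ G.Adj x y))
    {T S : Set V} (hT : T ⊆ A)
    (h : Relation.ReflTransGen (PruneStep G) T S) :
    Relation.ReflTransGen (PruneStep G) (⇑π '' T) (⇑π '' S) := by
  induction h with
  | refl => exact .refl
  | tail hab hbc ih => exact ih.tail (pruneStep_map π hadj ((rtg_subset hab).trans hT) hbc)

lemma noOVE_map (π : V ≃ V) {A S : Set V}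
    (hadj : ∀ x ∈ A, ∀ y ∈ A, (G.Adj (π x) (π y) ↔ G.Adj x y))
    (hS : S ⊆ A)
    (h : ∀ w : S, ¬OneVertexExtension (G.induce S) w) :
    ∀ w : (⇑π '' S : Set V), ¬OneVertexExtension (G.induce (⇑π '' S)) w := by
  intro w hw
  exact h _ (ove_map (moveIso π hadj hS).symm hw)

lemma exists_pruned_aux (G : SimpleGraph V) (n : ℕ) : ∀ A : Set V, A.Finite → A.ncard = n →
    ∃ S, Relation.ReflTransGen (PruneStep G) A S ∧
      ∀ w : S, ¬OneVertexExtension (G.induce S) w := by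
  induction n using Nat.strong_induction_on with
  | _ n ih =>
  intro A hfin hn
  by_cases h : ∀ w : A, ¬OneVertexExtension (G.induce A) w
  · exact ⟨A, .refl, h⟩
  · push_neg at h
    obtain ⟨⟨v, hv⟩, hove⟩ := h
    obtain ⟨S, hS1, hS2⟩ := ih (A \ {v}).ncard
      (hn ▸ Set.ncard_diff_singleton_lt_of_mem hv hfin) (A \ {v}) hfin.diff rfl
    exact ⟨S, .head ⟨v, hv, hove, rfl⟩ hS1, hS2⟩

lemma exists_pruned [Fintype V] (G : SimpleGraph V) (A : Set V) :
    ∃ S, Relation.ReflTransGen (PruneStep G) A S ∧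
      ∀ w : S, ¬OneVertexExtension (G.induce S) w :=
  exists_pruned_aux G A.ncard A (Set.toFinite A) rfl

lemma key [Fintype V] [DecidableEq V] (G : SimpleGraph V) (n : ℕ) :
    ∀ A : Set V, A.ncard = n → ∀ S1 S2 : Set V,
      Relation.ReflTransGen (PruneStep G) A S1 →
      (∀ w : S1, ¬OneVertexExtension (G.induce S1) w) →
      Relation.ReflTransGen (PruneStep G) A S2 →
      (∀ w : S2, ¬OneVertexExtension (G.induce S2) w) →
      Nonempty (G.induce S1 ≃g G.induce S2) := by
  induction n using Nat.strong_induction_on with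
  | _ n ih =>
  intro A hA S1 S2 h1 hn1 h2 hn2
  rcases h1.cases_head with rfl | ⟨B1, st1, h1'⟩
  · rcases h2.cases_head with rfl | ⟨B2, st2, _⟩
    · exact ⟨Iso.refl⟩
    · obtain ⟨v, hv, hove, _⟩ := st2
      exact absurd hove (hn1 ⟨v, hv⟩)
  rcases h2.cases_head with rfl | ⟨B2, st2, h2'⟩
  · obtain ⟨v, hv, hove, _⟩ := st1
    exact absurd hove (hn2 ⟨v, hv⟩)
  obtain ⟨v, hv, hovev, rfl⟩ := st1
  obtain ⟨w, hw, hovew, rfl⟩ := st2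
  have hvlt : (A \ {v}).ncard < n := hA ▸ Set.ncard_diff_singleton_lt_of_mem hv (Set.toFinite A)
  have hwlt : (A \ {w}).ncard < n := hA ▸ Set.ncard_diff_singleton_lt_of_mem hw (Set.toFinite A)
  rcases eq_or_ne v w with rfl | hvw
  · exact ih _ hvlt _ rfl S1 S2 h1' hn1 h2' hn2
  have hAv : AmbOVE G A v := (ove_iff G hv).mp hovev
  have hAw : AmbOVE G A w := (ove_iff G hw).mp hovew
  have twin_case : (∀ z ∈ A, z ≠ v → z ≠ w → (G.Adj v z ↔ G.Adj w z)) →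
      Nonempty (G.induce S1 ≃g G.induce S2) := by
    intro tw
    set π := Equiv.swap v w with hπ
    have hadj := swap_adj_of_twins hv hw tw
    have himgA : ⇑π '' A = A := by
      apply Set.Subset.antisymm
      · rintro x ⟨y, hy, rfl⟩
        exact swap_mem_of_mem hv hw hy
      · intro x hx
        exact ⟨π x, swap_mem_of_mem hv hw hx, by simp [hπ, Equiv.swap_apply_self]⟩
    have himg : ⇑π '' (A \ {w}) = A \ {v} := by
      rw [Set.image_diff (Equiv.injective π), Set.image_singleton, himgA, hπ,
        Equiv.swap_apply_right]
    have hsub : S2 ⊆ A \ {w} := rtg_subset h2'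
    have hsub' : S2 ⊆ A := hsub.trans Set.diff_subset
    have h2'' : Relation.ReflTransGen (PruneStep G) (A \ {v}) (⇑π '' S2) := by
      have := rtg_map π hadj (Set.diff_subset) h2'
      rwa [himg] at this
    have hn2' := noOVE_map π hadj hsub' hn2
    obtain ⟨i⟩ := ih _ hvlt _ rfl S1 (⇑π '' S2) h1' hn1 h2'' hn2'
    exact ⟨i.trans (moveIso π hadj hsub').symm⟩
  rcases ambove_persist G hvw hAv with hpv | htw
  swap
  · exact twin_case htw
  rcases ambove_persist G hvw.symm hAw with hpw | htw
  swap
  · exact twin_case (fun z hz h1 h2 => (htw z hz h2 h1).symm)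
  obtain ⟨P, hP1, hP2⟩ := exists_pruned G ((A \ {v}) \ {w})
  have hw' : w ∈ A \ {v} := ⟨hw, fun h => hvw (Set.mem_singleton_iff.mp h).symm⟩
  have hv' : v ∈ A \ {w} := ⟨hv, fun h => hvw (Set.mem_singleton_iff.mp h)⟩
  have e1 : Relation.ReflTransGen (PruneStep G) (A \ {v}) P :=
    .head ⟨w, hw', (ove_iff G hw').mpr hpw, rfl⟩ hP1
  have e2 : Relation.ReflTransGen (PruneStep G) (A \ {w}) P := by
    refine .head ⟨v, hv', (ove_iff G hv').mpr hpv, rfl⟩ ?_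
    rwa [Set.diff_diff_comm]
  obtain ⟨i1⟩ := ih _ hvlt _ rfl S1 P h1' hn1 e1 hP2
  obtain ⟨i2⟩ := ih _ hwlt _ rfl S2 P h2' hn2 e2 hP2
  exact ⟨i1.trans i2.symm⟩

end Main

/-- Every graph has a unique pruned subgraph up to isomorphism: if `G[S1]` and `G[S2]`
are both pruned subgraphs of `G`, then they are isomorphic. -/
theorem pruned_subgraph_unique {V : Type*} [Fintype V] (G : SimpleGraph V)
    (S1 S2 : Set V) (h1 : IsPrunedSet G S1) (h2 : IsPrunedSet G S2) :
    Nonempty ((G.induce S1) ≃g (G.induce S2)) := by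
  classical
  exact key G (Set.univ : Set V).ncard Set.univ rfl S1 S2 h1.1 h1.2 h2.1 h2.2
end

section
/- Let G be a graph and let M1, M2 be disjoint nonempty modules of G such that every vertex of M1 is adjacent to every vertex of M2 and N_G(M1) = M2 (i.e., M1 has no neighbor outside M1 ∪ M2). Assume that the edge set of G[M1] equals a matching F1 and the edge set of G[M2] equals a matching F2 (so F1, F2 are the unique maximum matchings of G[M1], G[M2]). Let u1, …, uk be k distinct vertices of M1 exposed by F1, where k = min(number of F1-exposed vertices of M1, |M2|); let (w1, …, w_{n2}) be an ordering of M2 in which the F2-exposed vertices appear first and the two endpoints of each edge of F2 are consecutive; and let F_{1,2} = { {u_i, w_i} : 1 ≤ i ≤ k }. Then G has a maximum matching that contains all edges of F_{1,2}. -/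
open SimpleGraph

/-- A vertex is matched by `F` if it is an endpoint of an edge of `F`. -/
def Matched {V : Type*} (F : Set (Sym2 V)) (v : V) : Prop := ∃ e ∈ F, v ∈ e

lemma sym2_ne {V : Type*} {a b c d : V} (h1 : a ≠ c) (h2 : a ≠ d) : s(a,b) ≠ s(c,d) := by
  intro h
  rcases Sym2.eq_iff.1 h with ⟨h', _⟩ | ⟨h', _⟩
  exacts [h1 h', h2 h']

lemma sym2_vdisj {V : Type*} {a b c d : V} (h1 : a ≠ c) (h2 : a ≠ d) (h3 : b ≠ c) (h4 : b ≠ d)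
    {v : V} (hv1 : v ∈ s(a,b)) (hv2 : v ∈ s(c,d)) : False := by
  rcases Sym2.mem_iff.1 hv1 with rfl | rfl <;> rcases Sym2.mem_iff.1 hv2 with h | h
  exacts [h1 h, h2 h, h3 h, h4 h]

lemma exists_maximum_matching {V : Type*} [Fintype V] (G : SimpleGraph V) :
    ∃ F, IsMaximumMatching G F := by
  have hne : Nonempty {F : Set (Sym2 V) // IsMatching G F} :=
    ⟨⟨∅, Set.empty_subset _, fun e he => absurd he (Set.notMem_empty e)⟩⟩
  obtain ⟨⟨F, hF⟩, hmax⟩ :=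
    Finite.exists_max (fun F : {F : Set (Sym2 V) // IsMatching G F} => F.1.ncard)
  exact ⟨F, hF, fun F' hF' => hmax ⟨F', hF'⟩⟩

lemma max_no_exposed_adj {V : Type*} [Fintype V] {G : SimpleGraph V} {F : Set (Sym2 V)}
    (hF : IsMaximumMatching G F) {a b : V} (hab : G.Adj a b)
    (ha : ¬Matched F a) (hb : ¬Matched F b) : False := by
  have hnotmem : s(a, b) ∉ F := fun h => ha ⟨_, h, Sym2.mem_mk_left a b⟩
  have hins : IsMatching G (insert s(a, b) F) := by
    constructor
    · intro e he
      rcases Set.mem_insert_iff.1 he with rfl | he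
      · exact (SimpleGraph.mem_edgeSet G).2 hab
      · exact hF.1.1 he
    · intro e he f hf v hve hvf
      rcases Set.mem_insert_iff.1 he with rfl | he <;> rcases Set.mem_insert_iff.1 hf with rfl | hf
      · rfl
      · exact absurd (show Matched F v from ⟨f, hf, hvf⟩)
          (by rcases Sym2.mem_iff.1 hve with rfl | rfl; exacts [ha, hb])
      · exact absurd (show Matched F v from ⟨e, he, hve⟩)
          (by rcases Sym2.mem_iff.1 hvf with rfl | rfl; exacts [ha, hb])
      · exact hF.1.2 e he f hf v hve hvf
  have h1 := hF.2 _ hins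
  rw [Set.ncard_insert_of_notMem hnotmem (Set.toFinite _)] at h1
  omega

lemma swap_max {V : Type*} [Fintype V] {G : SimpleGraph V} {F : Set (Sym2 V)}
    (D A : Set (Sym2 V)) (hF : IsMaximumMatching G F) (hD : D ⊆ F) (hA : A ⊆ G.edgeSet)
    (hAd : ∀ e ∈ A, ∀ f ∈ A, ∀ v : V, v ∈ e → v ∈ f → e = f)
    (hfree : ∀ e ∈ A, ∀ v : V, v ∈ e → ∀ f ∈ F, v ∈ f → f ∈ D)
    (hcard : D.ncard = A.ncard) :
    IsMaximumMatching G (F \ D ∪ A) := by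
  have hAF : Disjoint (F \ D) A := by
    rw [Set.disjoint_right]
    intro e
    induction e using Sym2.ind with
    | _ x y =>
      intro he hediff
      exact hediff.2 (hfree _ he x (Sym2.mem_mk_left x y) _ hediff.1 (Sym2.mem_mk_left x y))
  have hsize : (F \ D ∪ A).ncard = F.ncard := by
    rw [Set.ncard_union_eq hAF (Set.toFinite _) (Set.toFinite _),
        Set.ncard_diff hD (Set.toFinite _)]
    have hle : D.ncard ≤ F.ncard := Set.ncard_le_ncard hD (Set.toFinite _)
    omega
  refine ⟨⟨?_, ?_⟩, ?_⟩
  · intro e he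
    rcases he with he | he
    · exact hF.1.1 he.1
    · exact hA he
  · intro e he f hf v hve hvf
    rcases he with he | he <;> rcases hf with hf | hf
    · exact hF.1.2 e he.1 f hf.1 v hve hvf
    · exact absurd (hfree f hf v hvf e he.1 hve) he.2
    · exact absurd (hfree e he v hve f hf.1 hvf) hf.2
    · exact hAd e he f hf v hve hvf
  · intro F' hF'
    rw [hsize]
    exact hF.2 F' hF'

/-- Greedy matching for a pendant module: `M1, M2` are disjoint nonempty modules joined
completely, `M1` has no neighbour outside `M1 ∪ M2`, and `G[M1]`, `G[M2]` have edge sets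
equal to matchings `F1`, `F2`. If `u 0, …, u (k-1)` are `k` distinct `F1`-exposed vertices
of `M1`, where `k = min(#exposed vertices of M1, |M2|)`, and `w` is a canonical ordering of
`M2` (exposed vertices first, endpoints of each edge of `F2` consecutive), then `G` has a
maximum matching containing every edge `{u i, w i}` for `i < k`. -/
theorem pendant_greedy {V : Type*} [Fintype V] (G : SimpleGraph V) (M1 M2 : Set V)
    (hM1 : IsModule G M1) (hM2 : IsModule G M2)
    (hd : Disjoint M1 M2) (hne1 : M1.Nonempty) (hne2 : M2.Nonempty)
    (hjoin : ∀ u ∈ M1, ∀ w ∈ M2, G.Adj u w)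
    (hpend : ∀ u ∈ M1, ∀ w : V, G.Adj u w → w ∈ M1 ∪ M2)
    (F1 F2 : Set (Sym2 V))
    (hF1 : IsMatching (inducedOn G M1) F1) (hE1 : (inducedOn G M1).edgeSet = F1)
    (hF2 : IsMatching (inducedOn G M2) F2) (hE2 : (inducedOn G M2).edgeSet = F2)
    (k n2 : ℕ)
    (hk : k = min ((M1 \ {v | Matched F1 v}).ncard) M2.ncard)
    (hn2 : n2 = M2.ncard) (hkn : k ≤ n2)
    (u : Fin k → V) (hu_inj : Function.Injective u)
    (hu_mem : ∀ i, u i ∈ M1) (hu_exp : ∀ i, ¬Matched F1 (u i))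
    (w : Fin n2 → V) (hw_inj : Function.Injective w)
    (hw_range : Set.range w = M2)
    (hw_exp_first : ∀ i j : Fin n2, ¬Matched F2 (w i) → Matched F2 (w j) → i < j)
    (hw_consec : ∀ e ∈ F2, ∃ (i : Fin n2) (h : (i : ℕ) + 1 < n2),
      e = s(w i, w ⟨(i : ℕ) + 1, h⟩)) :
    ∃ F : Set (Sym2 V), IsMaximumMatching G F ∧
      ∀ i : Fin k, s(u i, w (Fin.castLE hkn i)) ∈ F := by
  classical
  obtain ⟨F0, hF0⟩ := exists_maximum_matching G
  have hne12 : ∀ {a b : V}, a ∈ M1 → b ∈ M2 → a ≠ b := fun ha hb h =>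
    Set.disjoint_left.1 hd ha (h ▸ hb)
  have hwM2 : ∀ q : Fin n2, w q ∈ M2 := fun q => hw_range ▸ ⟨q, rfl⟩
  have key : ∀ m : ℕ, ∃ F, IsMaximumMatching G F ∧
      ∀ j : Fin k, (j : ℕ) < m → s(u j, w (Fin.castLE hkn j)) ∈ F := by
    intro m
    induction m with
    | zero => exact ⟨F0, hF0, fun j hj => absurd hj (Nat.not_lt_zero _)⟩
    | succ i ih =>
      obtain ⟨F, hFmax, hprev⟩ := ih
      by_cases hik : i < k
      · -- main step
        set I : Fin k := ⟨i, hik⟩ with hIdef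
        set iW : Fin n2 := Fin.castLE hkn I with hiWdef
        have huM1 : u I ∈ M1 := hu_mem I
        have hadj_uw : G.Adj (u I) (w iW) := hjoin _ huM1 _ (hwM2 iW)
        have hMatch := hFmax.1
        have huniq : ∀ {d : Sym2 V}, d ∈ F → ∀ {v : V}, v ∈ d → ∀ f ∈ F, v ∈ f → f = d :=
          fun {d} hdF {v} hvd f hf hvf => hMatch.2 f hf d hdF v hvf hvd
        have hnbr : ∀ (j : Fin k) (v : V), G.Adj (u j) v → v ∈ M2 := by
          intro j v hadj
          rcases hpend (u j) (hu_mem j) v hadj with h1 | h2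
          · exact absurd ⟨s(u j, v),
              by rw [← hE1]; exact (SimpleGraph.mem_edgeSet _).2 ⟨hadj, hu_mem j, h1⟩,
              Sym2.mem_mk_left _ _⟩ (hu_exp j)
          · exact h2
        have hWprot : ∀ (j : Fin k), (j : ℕ) < i → ∀ f ∈ F, w (Fin.castLE hkn j) ∈ f →
            f = s(u j, w (Fin.castLE hkn j)) :=
          fun j hj f hf hvf => huniq (hprev j hj) (Sym2.mem_mk_right _ _) f hf hvf
        by_cases heF : s(u I, w iW) ∈ F
        · refine ⟨F, hFmax, fun j hj => ?_⟩
          rcases Nat.lt_succ_iff_lt_or_eq.1 hj with h | h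
          · exact hprev j h
          · have hje : j = I := Fin.ext h
            rw [hje]; exact heF
        by_cases hmu : Matched F (u I) <;> by_cases hmw : Matched F (w iW)
        · -- Case 4: both matched
          obtain ⟨d1, hd1F, hud1⟩ := hmu
          obtain ⟨z, rfl⟩ := Sym2.mem_iff_exists.1 hud1
          obtain ⟨d2, hd2F, hwd2⟩ := hmw
          obtain ⟨y, rfl⟩ := Sym2.mem_iff_exists.1 hwd2
          have hzM2 : z ∈ M2 := hnbr I z ((SimpleGraph.mem_edgeSet _).1 (hMatch.1 hd1F))
          have hadj_uz : G.Adj (u I) z := (SimpleGraph.mem_edgeSet _).1 (hMatch.1 hd1F)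
          have hadj_wy : G.Adj (w iW) y := (SimpleGraph.mem_edgeSet _).1 (hMatch.1 hd2F)
          have hzw : z ≠ w iW := fun h => heF (h ▸ hd1F)
          have hyu : y ≠ u I := fun h => heF (by rw [h, Sym2.eq_swap] at hd2F; exact hd2F)
          have hne_uz : u I ≠ z := hne12 huM1 hzM2
          have hne_wy : w iW ≠ y := G.ne_of_adj hadj_wy
          have hd1d2 : s(u I, z) ≠ s(w iW, y) :=
            sym2_ne (hne12 huM1 (hwM2 iW)) (Ne.symm hyu)
          have hzy : z ≠ y := by
            intro h
            exact hd1d2 (huniq hd2F (by rw [h]; exact Sym2.mem_mk_right _ _) _ hd1F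
              (Sym2.mem_mk_right _ _))
          have hnotD12 : ∀ (j : Fin k), (j : ℕ) < i →
              s(u j, w (Fin.castLE hkn j)) ∉ ({s(u I, z), s(w iW, y)} : Set (Sym2 V)) := by
            intro j hj hmem
            rcases Set.mem_insert_iff.1 hmem with h | h
            · rcases Sym2.eq_iff.1 h with ⟨h1, h2⟩ | ⟨h1, h2⟩
              · have h3 : (j : ℕ) = i := congrArg Fin.val (hu_inj h1); omega
              · exact hne12 (hu_mem j) hzM2 h1
            · rcases Sym2.eq_iff.1 (Set.mem_singleton_iff.1 h) with ⟨h1, h2⟩ | ⟨h1, h2⟩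
              · exact hne12 (hu_mem j) (hwM2 iW) h1
              · have h3 : (j : ℕ) = i := congrArg Fin.val (hw_inj h2); omega
          by_cases hyM2 : y ∈ M2
          · -- Case 4b : y in M2
            have hwyF2 : s(w iW, y) ∈ F2 := by
              rw [← hE2]; exact (SimpleGraph.mem_edgeSet _).2 ⟨hadj_wy, hwM2 iW, hyM2⟩
            obtain ⟨p, hp⟩ : ∃ p, w p = z := by rw [← hw_range] at hzM2; exact hzM2
            have hz_not_prot : ¬ ((p : ℕ) < i) := by
              intro hpi
              have hjk : (p : ℕ) < k := lt_trans hpi hik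
              have hcast : Fin.castLE hkn ⟨(p : ℕ), hjk⟩ = p := Fin.ext rfl
              have heq := hWprot ⟨(p : ℕ), hjk⟩ hpi (s(u I, z)) hd1F
                (by rw [hcast, hp]; exact Sym2.mem_mk_right _ _)
              rw [hcast, hp] at heq
              rcases Sym2.eq_iff.1 heq with ⟨h1, h2⟩ | ⟨h1, h2⟩
              · have h3 : i = (p : ℕ) := congrArg Fin.val (hu_inj h1)
                omega
              · exact hne12 huM1 hzM2 h1
            have hzF2 : Matched F2 z := by
              by_contra hcon
              have hlt := hw_exp_first p iW (by rw [hp]; exact hcon)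
                ⟨_, hwyF2, Sym2.mem_mk_left _ _⟩
              exact hz_not_prot hlt
            obtain ⟨e2, he2, hze2⟩ := hzF2
            obtain ⟨m, hmlt, he2eq⟩ := hw_consec e2 he2
            subst he2eq
            have hpgt : i < (p : ℕ) := by
              rcases lt_trichotomy ((p : ℕ)) i with h | h | h
              · exact absurd h hz_not_prot
              · exfalso; apply hzw; rw [← hp]; exact congrArg w (Fin.ext h)
              · exact h
            obtain ⟨q, hqF2, hqgt⟩ :
                ∃ q : Fin n2, s(z, w q) ∈ F2 ∧ i < (q : ℕ) := by
              rcases Sym2.mem_iff.1 hze2 with h | h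
              · refine ⟨⟨(m : ℕ) + 1, hmlt⟩, by rw [h]; exact he2, ?_⟩
                have hpm : p = m := hw_inj (hp.trans h)
                have hpv : (p : ℕ) = (m : ℕ) := congrArg Fin.val hpm
                show i < (m : ℕ) + 1
                omega
              · refine ⟨m, by rw [h, Sym2.eq_swap]; exact he2, ?_⟩
                have hpm : p = ⟨(m : ℕ) + 1, hmlt⟩ := hw_inj (hp.trans h)
                have hpv : (p : ℕ) = (m : ℕ) + 1 := congrArg Fin.val hpm
                by_contra hle
                have hmi : (m : ℕ) = i := by omega
                have hmiW : m = iW := Fin.ext hmi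
                rw [← h] at he2
                rw [hmiW] at he2
                have heq2 := hF2.2 _ he2 _ hwyF2 (w iW)
                  (Sym2.mem_mk_left _ _) (Sym2.mem_mk_left _ _)
                rcases Sym2.eq_iff.1 heq2 with ⟨h1, h2⟩ | ⟨h1, h2⟩
                · exact hzy h2
                · exact hzw h2
            have hzsM2 : w q ∈ M2 := hwM2 q
            have hadj_zzs : G.Adj z (w q) := ((SimpleGraph.mem_edgeSet _).1 (hF2.1 hqF2)).1
            have hne_zzs : z ≠ w q := G.ne_of_adj hadj_zzs
            have hzsw : w q ≠ w iW := by
              intro h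
              have h3 : (q : ℕ) = i := congrArg Fin.val (hw_inj h)
              omega
            have hzsy : w q ≠ y := by
              intro h
              have heq2 := hF2.2 _ hqF2 _ hwyF2 (w q) (Sym2.mem_mk_right _ _)
                (by rw [h]; exact Sym2.mem_mk_right _ _)
              rcases Sym2.eq_iff.1 heq2 with ⟨h1, h2⟩ | ⟨h1, h2⟩
              · exact hzw h1
              · exact hzy h1
            have hne_uzs : u I ≠ w q := hne12 huM1 hzsM2
            have hzs_prot : ∀ (j : Fin k), (j : ℕ) < i → w (Fin.castLE hkn j) ≠ w q := by
              intro j hj h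
              have h3 : (j : ℕ) = (q : ℕ) := congrArg Fin.val (hw_inj h)
              omega
            by_cases hmzs : Matched F (w q)
            · -- Case 4b(b) : w q matched in F
              obtain ⟨f0, hf0F, hzsf0⟩ := hmzs
              obtain ⟨m', rfl⟩ := Sym2.mem_iff_exists.1 hzsf0
              have hadj_zsm' : G.Adj (w q) m' := (SimpleGraph.mem_edgeSet _).1 (hMatch.1 hf0F)
              have hne_zsm' : w q ≠ m' := G.ne_of_adj hadj_zsm'
              have hm'M2 : m' ∉ M2 := by
                intro hcon
                have hf0F2 : s(w q, m') ∈ F2 := by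
                  rw [← hE2]; exact (SimpleGraph.mem_edgeSet _).2 ⟨hadj_zsm', hzsM2, hcon⟩
                have heq2 := hF2.2 _ hf0F2 _ hqF2 (w q)
                  (Sym2.mem_mk_left _ _) (Sym2.mem_mk_right _ _)
                have hm'z : m' = z := by
                  rcases Sym2.eq_iff.1 heq2 with ⟨h1, h2⟩ | ⟨h1, h2⟩
                  · exact absurd h1 (Ne.symm hne_zzs)
                  · exact h2
                have heq3 := huniq hd1F (Sym2.mem_mk_right _ _) _ hf0F
                  (hm'z ▸ Sym2.mem_mk_right (w q) m')
                rcases Sym2.eq_iff.1 heq3 with ⟨h1, h2⟩ | ⟨h1, h2⟩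
                · exact hne_uzs h1.symm
                · exact hne_zzs h1.symm
              have hm'u : m' ≠ u I := by
                intro h
                have heq3 := huniq hd1F (Sym2.mem_mk_left _ _) _ hf0F
                  (h ▸ Sym2.mem_mk_right (w q) m')
                rcases Sym2.eq_iff.1 heq3 with ⟨h1, h2⟩ | ⟨h1, h2⟩
                · exact hne_uzs h1.symm
                · exact hne_zzs h1.symm
              have hm'y : m' ≠ y := fun h => hm'M2 (h ▸ hyM2)
              have hm'w : m' ≠ w iW := fun h => hm'M2 (h ▸ hwM2 iW)
              have hm'z : m' ≠ z := fun h => hm'M2 (h ▸ hzM2)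
              have hadj_m'y : G.Adj m' y :=
                ((hM2 (w q) hzsM2 y hyM2 m' hm'M2).1 hadj_zsm').symm
              have hd1f0 : s(u I, z) ≠ s(w q, m') := sym2_ne hne_uzs (Ne.symm hm'u)
              have hd2f0 : s(w iW, y) ≠ s(w q, m') := sym2_ne (Ne.symm hzsw) (Ne.symm hm'w)
              have hD3 : ({s(u I, z), s(w iW, y), s(w q, m')} : Set (Sym2 V)).ncard = 3 := by
                rw [Set.ncard_insert_of_notMem (by simp [hd1d2, hd1f0]) (Set.toFinite _),
                    Set.ncard_insert_of_notMem (by simp [hd2f0]) (Set.toFinite _),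
                    Set.ncard_singleton]
              have hA3 : ({s(u I, w iW), s(z, w q), s(m', y)} : Set (Sym2 V)).ncard = 3 := by
                rw [Set.ncard_insert_of_notMem
                      (by simp [sym2_ne hne_uz hne_uzs, sym2_ne (Ne.symm hm'u) (Ne.symm hyu)])
                      (Set.toFinite _),
                    Set.ncard_insert_of_notMem (by simp [sym2_ne (Ne.symm hm'z) hzy])
                      (Set.toFinite _),
                    Set.ncard_singleton]
              refine ⟨F \ {s(u I, z), s(w iW, y), s(w q, m')} ∪
                  {s(u I, w iW), s(z, w q), s(m', y)},
                swap_max _ _ hFmax ?_ ?_ ?_ ?_ ?_, ?_⟩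
              · intro x hx
                simp only [Set.mem_insert_iff, Set.mem_singleton_iff] at hx
                rcases hx with rfl | rfl | rfl
                exacts [hd1F, hd2F, hf0F]
              · intro x hx
                simp only [Set.mem_insert_iff, Set.mem_singleton_iff] at hx
                rcases hx with rfl | rfl | rfl
                exacts [(SimpleGraph.mem_edgeSet _).2 hadj_uw,
                  (SimpleGraph.mem_edgeSet _).2 hadj_zzs,
                  (SimpleGraph.mem_edgeSet _).2 hadj_m'y]
              · intro e' he' f' hf' v hv1 hv2
                simp only [Set.mem_insert_iff, Set.mem_singleton_iff] at he' hf'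
                rcases he' with rfl | rfl | rfl <;> rcases hf' with rfl | rfl | rfl
                · rfl
                · exact (sym2_vdisj hne_uz hne_uzs (Ne.symm hzw) (Ne.symm hzsw) hv1 hv2).elim
                · exact (sym2_vdisj (Ne.symm hm'u) (Ne.symm hyu) (Ne.symm hm'w) hne_wy
                    hv1 hv2).elim
                · exact (sym2_vdisj (Ne.symm hne_uz) hzw (Ne.symm hne_uzs) hzsw hv1 hv2).elim
                · rfl
                · exact (sym2_vdisj (Ne.symm hm'z) hzy hne_zsm' hzsy hv1 hv2).elim
                · exact (sym2_vdisj hm'u hm'w hyu (Ne.symm hne_wy) hv1 hv2).elim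
                · exact (sym2_vdisj hm'z (Ne.symm hne_zsm') (Ne.symm hzy) (Ne.symm hzsy)
                    hv1 hv2).elim
                · rfl
              · intro e' he' v hv f hfF hvf
                simp only [Set.mem_insert_iff, Set.mem_singleton_iff] at he' ⊢
                rcases he' with rfl | rfl | rfl
                · rcases Sym2.mem_iff.1 hv with rfl | rfl
                  · exact Or.inl (huniq hd1F (Sym2.mem_mk_left _ _) f hfF hvf)
                  · exact Or.inr (Or.inl (huniq hd2F (Sym2.mem_mk_left _ _) f hfF hvf))
                · rcases Sym2.mem_iff.1 hv with rfl | rfl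
                  · exact Or.inl (huniq hd1F (Sym2.mem_mk_right _ _) f hfF hvf)
                  · exact Or.inr (Or.inr (huniq hf0F (Sym2.mem_mk_left _ _) f hfF hvf))
                · rcases Sym2.mem_iff.1 hv with rfl | rfl
                  · exact Or.inr (Or.inr (huniq hf0F (Sym2.mem_mk_right _ _) f hfF hvf))
                  · exact Or.inr (Or.inl (huniq hd2F (Sym2.mem_mk_right _ _) f hfF hvf))
              · rw [hD3, hA3]
              · intro j hj
                rcases Nat.lt_succ_iff_lt_or_eq.1 hj with h | h
                · refine Set.mem_union_left _ ⟨hprev j h, ?_⟩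
                  intro hmem
                  simp only [Set.mem_insert_iff, Set.mem_singleton_iff] at hmem
                  rcases hmem with hm | hm | hm
                  · exact hnotD12 j h (Set.mem_insert_iff.2 (Or.inl hm))
                  · exact hnotD12 j h (Set.mem_insert_iff.2 (Or.inr hm))
                  · rcases Sym2.eq_iff.1 hm with ⟨h1, h2⟩ | ⟨h1, h2⟩
                    · exact hne12 (hu_mem j) hzsM2 h1
                    · exact hzs_prot j h h2
                · have hje : j = I := Fin.ext h
                  rw [hje]
                  exact Set.mem_union_right _ (Set.mem_insert _ _)
            · -- Case 4b(a) : w q exposed in F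
              refine ⟨F \ {s(u I, z), s(w iW, y)} ∪ {s(u I, w iW), s(z, w q)},
                swap_max _ _ hFmax ?_ ?_ ?_ ?_ ?_, ?_⟩
              · intro x hx
                simp only [Set.mem_insert_iff, Set.mem_singleton_iff] at hx
                rcases hx with rfl | rfl
                exacts [hd1F, hd2F]
              · intro x hx
                simp only [Set.mem_insert_iff, Set.mem_singleton_iff] at hx
                rcases hx with rfl | rfl
                exacts [(SimpleGraph.mem_edgeSet _).2 hadj_uw,
                  (SimpleGraph.mem_edgeSet _).2 hadj_zzs]
              · intro e' he' f' hf' v hv1 hv2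
                simp only [Set.mem_insert_iff, Set.mem_singleton_iff] at he' hf'
                rcases he' with rfl | rfl <;> rcases hf' with rfl | rfl
                · rfl
                · exact (sym2_vdisj hne_uz hne_uzs (Ne.symm hzw) (Ne.symm hzsw) hv1 hv2).elim
                · exact (sym2_vdisj (Ne.symm hne_uz) hzw (Ne.symm hne_uzs) hzsw hv1 hv2).elim
                · rfl
              · intro e' he' v hv f hfF hvf
                simp only [Set.mem_insert_iff, Set.mem_singleton_iff] at he' ⊢
                rcases he' with rfl | rfl
                · rcases Sym2.mem_iff.1 hv with rfl | rfl
                  · exact Or.inl (huniq hd1F (Sym2.mem_mk_left _ _) f hfF hvf)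
                  · exact Or.inr (huniq hd2F (Sym2.mem_mk_left _ _) f hfF hvf)
                · rcases Sym2.mem_iff.1 hv with rfl | rfl
                  · exact Or.inl (huniq hd1F (Sym2.mem_mk_right _ _) f hfF hvf)
                  · exact absurd ⟨f, hfF, hvf⟩ hmzs
              · rw [Set.ncard_pair hd1d2, Set.ncard_pair (sym2_ne hne_uz hne_uzs)]
              · intro j hj
                rcases Nat.lt_succ_iff_lt_or_eq.1 hj with h | h
                · exact Set.mem_union_left _ ⟨hprev j h, hnotD12 j h⟩
                · have hje : j = I := Fin.ext h
                  rw [hje]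
                  exact Set.mem_union_right _ (Set.mem_insert _ _)
          · -- Case 4a : y outside M2
            have hadj_zy : G.Adj z y := by
              by_cases hyM1 : y ∈ M1
              · exact (hjoin y hyM1 z hzM2).symm
              · exact (hM2 (w iW) (hwM2 iW) z hzM2 y hyM2).1 hadj_wy
            have hne_zy : z ≠ y := G.ne_of_adj hadj_zy
            refine ⟨F \ {s(u I, z), s(w iW, y)} ∪ {s(u I, w iW), s(z, y)},
              swap_max _ _ hFmax ?_ ?_ ?_ ?_ ?_, ?_⟩
            · intro x hx
              simp only [Set.mem_insert_iff, Set.mem_singleton_iff] at hx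
              rcases hx with rfl | rfl
              exacts [hd1F, hd2F]
            · intro x hx
              simp only [Set.mem_insert_iff, Set.mem_singleton_iff] at hx
              rcases hx with rfl | rfl
              exacts [(SimpleGraph.mem_edgeSet _).2 hadj_uw,
                (SimpleGraph.mem_edgeSet _).2 hadj_zy]
            · intro e' he' f' hf' v hv1 hv2
              simp only [Set.mem_insert_iff, Set.mem_singleton_iff] at he' hf'
              rcases he' with rfl | rfl <;> rcases hf' with rfl | rfl
              · rfl
              · exact (sym2_vdisj hne_uz (Ne.symm hyu) (Ne.symm hzw) hne_wy hv1 hv2).elim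
              · exact (sym2_vdisj (Ne.symm hne_uz) hzw hyu (Ne.symm hne_wy) hv1 hv2).elim
              · rfl
            · intro e' he' v hv f hfF hvf
              simp only [Set.mem_insert_iff, Set.mem_singleton_iff] at he' ⊢
              rcases he' with rfl | rfl
              · rcases Sym2.mem_iff.1 hv with rfl | rfl
                · exact Or.inl (huniq hd1F (Sym2.mem_mk_left _ _) f hfF hvf)
                · exact Or.inr (huniq hd2F (Sym2.mem_mk_left _ _) f hfF hvf)
              · rcases Sym2.mem_iff.1 hv with rfl | rfl
                · exact Or.inl (huniq hd1F (Sym2.mem_mk_right _ _) f hfF hvf)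
                · exact Or.inr (huniq hd2F (Sym2.mem_mk_right _ _) f hfF hvf)
            · rw [Set.ncard_pair hd1d2, Set.ncard_pair (sym2_ne hne_uz (Ne.symm hyu))]
            · intro j hj
              rcases Nat.lt_succ_iff_lt_or_eq.1 hj with h | h
              · exact Set.mem_union_left _ ⟨hprev j h, hnotD12 j h⟩
              · have hje : j = I := Fin.ext h
                rw [hje]
                exact Set.mem_union_right _ (Set.mem_insert _ _)
        · -- Case 2: u matched, w exposed
          obtain ⟨d1, hd1F, hud1⟩ := hmu
          obtain ⟨z, rfl⟩ := Sym2.mem_iff_exists.1 hud1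
          have hzM2 : z ∈ M2 := hnbr I z ((SimpleGraph.mem_edgeSet _).1 (hMatch.1 hd1F))
          refine ⟨F \ {s(u I, z)} ∪ {s(u I, w iW)},
            swap_max _ _ hFmax ?_ ?_ ?_ ?_ ?_, ?_⟩
          · intro x hx; rw [Set.mem_singleton_iff.1 hx]; exact hd1F
          · intro x hx; rw [Set.mem_singleton_iff.1 hx]
            exact (SimpleGraph.mem_edgeSet _).2 hadj_uw
          · intro e' he' f' hf' v hv1 hv2
            rw [Set.mem_singleton_iff.1 he', Set.mem_singleton_iff.1 hf']
          · intro e' he' v hv f hfF hvf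
            rw [Set.mem_singleton_iff.1 he'] at hv
            rcases Sym2.mem_iff.1 hv with rfl | rfl
            · exact Set.mem_singleton_iff.2 (huniq hd1F (Sym2.mem_mk_left _ _) f hfF hvf)
            · exact absurd ⟨f, hfF, hvf⟩ hmw
          · rw [Set.ncard_singleton, Set.ncard_singleton]
          · intro j hj
            rcases Nat.lt_succ_iff_lt_or_eq.1 hj with h | h
            · refine Set.mem_union_left _ ⟨hprev j h, ?_⟩
              intro hmem
              rcases Sym2.eq_iff.1 (Set.mem_singleton_iff.1 hmem) with ⟨h1, h2⟩ | ⟨h1, h2⟩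
              · have h3 : (j : ℕ) = i := congrArg Fin.val (hu_inj h1); omega
              · exact hne12 (hu_mem j) hzM2 h1
            · have hje : j = I := Fin.ext h
              rw [hje]; exact Set.mem_union_right _ rfl
        · -- Case 3: u exposed, w matched
          obtain ⟨d2, hd2F, hwd2⟩ := hmw
          obtain ⟨y, rfl⟩ := Sym2.mem_iff_exists.1 hwd2
          refine ⟨F \ {s(w iW, y)} ∪ {s(u I, w iW)},
            swap_max _ _ hFmax ?_ ?_ ?_ ?_ ?_, ?_⟩
          · intro x hx; rw [Set.mem_singleton_iff.1 hx]; exact hd2F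
          · intro x hx; rw [Set.mem_singleton_iff.1 hx]
            exact (SimpleGraph.mem_edgeSet _).2 hadj_uw
          · intro e' he' f' hf' v hv1 hv2
            rw [Set.mem_singleton_iff.1 he', Set.mem_singleton_iff.1 hf']
          · intro e' he' v hv f hfF hvf
            rw [Set.mem_singleton_iff.1 he'] at hv
            rcases Sym2.mem_iff.1 hv with rfl | rfl
            · exact absurd ⟨f, hfF, hvf⟩ hmu
            · exact Set.mem_singleton_iff.2 (huniq hd2F (Sym2.mem_mk_left _ _) f hfF hvf)
          · rw [Set.ncard_singleton, Set.ncard_singleton]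
          · intro j hj
            rcases Nat.lt_succ_iff_lt_or_eq.1 hj with h | h
            · refine Set.mem_union_left _ ⟨hprev j h, ?_⟩
              intro hmem
              rcases Sym2.eq_iff.1 (Set.mem_singleton_iff.1 hmem) with ⟨h1, h2⟩ | ⟨h1, h2⟩
              · exact hne12 (hu_mem j) (hwM2 iW) h1
              · have h3 : (j : ℕ) = i := congrArg Fin.val (hw_inj h2); omega
            · have hje : j = I := Fin.ext h
              rw [hje]; exact Set.mem_union_right _ rfl
        · -- Case 1: both exposed
          exact absurd hadj_uw (fun h => max_no_exposed_adj hFmax h hmu hmw)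
      · exact ⟨F, hFmax, fun j hj => hprev j (by have := j.isLt; omega)⟩
  obtain ⟨F, h1, h2⟩ := key k
  exact ⟨F, h1, fun i => h2 i i.isLt⟩
end

section
/- Let H be a graph and let M be a nonempty module of H such that the edge set of the induced subgraph H[M] equals a matching F_M. Then H has a maximum matching F satisfying both: (1) every vertex matched by F_M is matched by F; and (2) either every vertex of M is matched by F, or no edge of F has both endpoints outside M with at least one endpoint in N_H(M). -/
open SimpleGraph

/-- `N_G(M)` for a nonempty module `M`: the vertices outside `M` adjacent to all of `M`. -/
def moduleNbhd {V : Type*} (G : SimpleGraph V) (M : Set V) : Set V :=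
  {w | w ∉ M ∧ ∀ v ∈ M, G.Adj w v}

/-- Swapping an edge `f` of a matching for a new edge `s(a,b)` where `a` is exposed
and `b` lies (only) in `f` yields a matching of the same cardinality. -/
lemma swap_isMatching {V : Type*} [Fintype V] {H : SimpleGraph V} {F : Set (Sym2 V)}
    (hF : IsMatching H F) {f : Sym2 V} (hf : f ∈ F) {a b : V} (hadj : H.Adj a b)
    (ha : ¬ Matched F a) (hb : b ∈ f) :
    IsMatching H (insert s(a,b) (F \ {f})) ∧
      (insert s(a,b) (F \ {f})).ncard = F.ncard := by
  have hbonly : ∀ g ∈ F, b ∈ g → g = f := fun g hg hbg =>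
    hF.2 g hg f hf b hbg hb
  have hnotmem : s(a,b) ∉ F \ {f} := by
    intro h
    exact ha ⟨_, h.1, Sym2.mem_mk_left a b⟩
  refine ⟨⟨?_, ?_⟩, ?_⟩
  · intro e he
    rcases Set.mem_insert_iff.mp he with he1 | he2
    · exact he1 ▸ H.mem_edgeSet.mpr hadj
    · exact hF.1 he2.1
  · intro e he g hg v hve hvg
    rcases Set.mem_insert_iff.mp he with he1 | he2 <;>
      rcases Set.mem_insert_iff.mp hg with hg1 | hg2
    · rw [he1, hg1]
    · exfalso
      subst he1
      rcases Sym2.mem_iff.mp hve with rfl | rfl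
      · exact ha ⟨g, hg2.1, hvg⟩
      · exact hg2.2 (hbonly g hg2.1 hvg)
    · exfalso
      subst hg1
      rcases Sym2.mem_iff.mp hvg with rfl | rfl
      · exact ha ⟨e, he2.1, hve⟩
      · exact he2.2 (hbonly e he2.1 hve)
    · exact hF.2 e he2.1 g hg2.1 v hve hvg
  · rw [Set.ncard_insert_of_notMem hnotmem (Set.toFinite _)]
    exact Set.ncard_diff_singleton_add_one hf (Set.toFinite _)

/-- If `M` is a nonempty module of `H` whose induced edge set equals a matching `F_M`,
then `H` has a maximum matching `F` such that (1) every vertex matched by `F_M` is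
matched by `F`, and (2) either every vertex of `M` is matched by `F`, or no edge of `F`
has both endpoints outside `M` with at least one endpoint in `N_H(M)`. -/
theorem good_maximum_matching_exists {V : Type*} [Fintype V]
    (H : SimpleGraph V) (M : Set V) (hM : IsModule H M) (hne : M.Nonempty)
    (FM : Set (Sym2 V)) (hFM : IsMatching (inducedOn H M) FM)
    (hEM : (inducedOn H M).edgeSet = FM) :
    ∃ F : Set (Sym2 V), IsMaximumMatching H F ∧
      (∀ v : V, Matched FM v → Matched F v) ∧
      ((∀ v ∈ M, Matched F v) ∨
        ∀ e ∈ F, (∀ v ∈ e, v ∉ M) → ∀ v ∈ e, v ∉ moduleNbhd H M) := by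
  classical
  set n := Fintype.card V with hn
  -- the weight to be maximized
  let w : Set (Sym2 V) → ℕ :=
    fun F => F.ncard * (n + 1) + (M ∩ {v | Matched F v}).ncard
  have hempty : IsMatching H (∅ : Set (Sym2 V)) := by
    refine ⟨by simp, ?_⟩
    intro e he
    simp at he
  have : Nonempty {F : Set (Sym2 V) // IsMatching H F} := ⟨⟨∅, hempty⟩⟩
  obtain ⟨⟨F, hF⟩, hmaxw⟩ :=
    Finite.exists_max (fun F : {F : Set (Sym2 V) // IsMatching H F} => w F.1)
  have hmax' : ∀ F', IsMatching H F' → w F' ≤ w F := fun F' h => hmaxw ⟨F', h⟩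
  have hMcard : ∀ F' : Set (Sym2 V), (M ∩ {v | Matched F' v}).ncard ≤ n := by
    intro F'
    calc (M ∩ {v | Matched F' v}).ncard ≤ (Set.univ : Set V).ncard :=
          Set.ncard_le_ncard (Set.subset_univ _) (Set.toFinite _)
      _ = n := by rw [Set.ncard_univ, Nat.card_eq_fintype_card]
  -- F is a maximum matching
  have hmaxmatch : ∀ F', IsMatching H F' → F'.ncard ≤ F.ncard := by
    intro F' h
    by_contra hlt
    push_neg at hlt
    have h1 : w F' ≤ w F := hmax' F' h
    have h2 := hMcard F
    have h3 : (F.ncard + 1) * (n + 1) ≤ F'.ncard * (n + 1) :=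
      Nat.mul_le_mul_right _ hlt
    have h4 : (F.ncard + 1) * (n + 1) = F.ncard * (n + 1) + (n + 1) := by ring
    simp only [w] at h1
    omega
  -- auxiliary: strictly improving the matched-in-M count while keeping size contradicts max
  have himprove : ∀ F' : Set (Sym2 V), IsMatching H F' → F'.ncard = F.ncard →
      (M ∩ {v | Matched F v}).ncard + 1 ≤ (M ∩ {v | Matched F' v}).ncard → False := by
    intro F' h hcard hm
    have h1 : w F' ≤ w F := hmax' F' h
    simp only [w, hcard] at h1
    omega
  -- claim 1
  have claim1 : ∀ v : V, Matched FM v → Matched F v := by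
    by_contra hc
    push_neg at hc
    obtain ⟨a, ⟨e, heFM, hae⟩, haF⟩ := hc
    obtain ⟨b, rfl⟩ := Sym2.mem_iff_exists.mp hae
    have heE : s(a,b) ∈ (inducedOn H M).edgeSet := hEM ▸ heFM
    obtain ⟨hadj, haM, hbM⟩ := (inducedOn H M).mem_edgeSet.mp heE
    by_cases hbF : Matched F b
    · -- b matched by some f = s(b,c) with c ∉ M; swap f for s(a,b)
      obtain ⟨f, hfF, hbf⟩ := hbF
      obtain ⟨c, rfl⟩ := Sym2.mem_iff_exists.mp hbf
      have hcM : c ∉ M := by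
        intro hcM
        have hfE : s(b,c) ∈ (inducedOn H M).edgeSet := by
          refine (inducedOn H M).mem_edgeSet.mpr ?_
          exact ⟨H.mem_edgeSet.mp (hF.1 hfF), hbM, hcM⟩
        have : s(a,b) = s(b,c) :=
          hFM.2 _ heFM _ (hEM ▸ hfE) b (Sym2.mem_mk_right a b) (Sym2.mem_mk_left b c)
        exact haF ⟨s(b,c), hfF, this ▸ Sym2.mem_mk_left a b⟩
      obtain ⟨hF', hcard'⟩ := swap_isMatching hF hfF hadj haF (Sym2.mem_mk_left b c)
      refine himprove _ hF' hcard' ?_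
      have hsub : insert a (M ∩ {v | Matched F v}) ⊆
          M ∩ {v | Matched (insert s(a,b) (F \ {s(b,c)})) v} := by
        intro v hv
        rcases Set.mem_insert_iff.mp hv with rfl | hv
        · exact ⟨haM, ⟨s(v,b), Set.mem_insert _ _, Sym2.mem_mk_left v b⟩⟩
        · refine ⟨hv.1, ?_⟩
          obtain ⟨g, hgF, hvg⟩ := hv.2
          by_cases hgf : g = s(b,c)
          · subst hgf
            rcases Sym2.mem_iff.mp hvg with rfl | rfl
            · exact ⟨s(a,v), Set.mem_insert _ _, Sym2.mem_mk_right a v⟩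
            · exact absurd hv.1 hcM
          · exact ⟨g, Set.mem_insert_of_mem _ ⟨hgF, hgf⟩, hvg⟩
      have hanot : a ∉ M ∩ {v | Matched F v} := fun h => haF h.2
      calc (M ∩ {v | Matched F v}).ncard + 1
          = (insert a (M ∩ {v | Matched F v})).ncard :=
            (Set.ncard_insert_of_notMem hanot (Set.toFinite _)).symm
        _ ≤ _ := Set.ncard_le_ncard hsub (Set.toFinite _)
    · -- both a and b exposed: F ∪ {s(a,b)} is a bigger matching
      have hnotmem : s(a,b) ∉ F := fun h => haF ⟨_, h, Sym2.mem_mk_left a b⟩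
      have hF' : IsMatching H (insert s(a,b) F) := by
        refine ⟨?_, ?_⟩
        · intro e he
          rcases Set.mem_insert_iff.mp he with he1 | he2
          · exact he1 ▸ H.mem_edgeSet.mpr hadj
          · exact hF.1 he2
        · intro e he g hg v hve hvg
          rcases Set.mem_insert_iff.mp he with he1 | he2 <;>
            rcases Set.mem_insert_iff.mp hg with hg1 | hg2
          · rw [he1, hg1]
          · exfalso
            subst he1
            rcases Sym2.mem_iff.mp hve with rfl | rfl
            · exact haF ⟨g, hg2, hvg⟩
            · exact hbF ⟨g, hg2, hvg⟩
          · exfalso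
            subst hg1
            rcases Sym2.mem_iff.mp hvg with rfl | rfl
            · exact haF ⟨e, he2, hve⟩
            · exact hbF ⟨e, he2, hve⟩
          · exact hF.2 e he2 g hg2 v hve hvg
      have := hmaxmatch _ hF'
      rw [Set.ncard_insert_of_notMem hnotmem (Set.toFinite _)] at this
      omega
  -- claim 2
  refine ⟨F, ⟨hF, hmaxmatch⟩, claim1, ?_⟩
  by_cases hall : ∀ v ∈ M, Matched F v
  · exact Or.inl hall
  · push_neg at hall
    obtain ⟨u, huM, huF⟩ := hall
    right
    intro e heF hnotM x hxe hxN
    have hadj : H.Adj u x := (hxN.2 u huM).symm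
    obtain ⟨hF', hcard'⟩ := swap_isMatching hF heF hadj huF hxe
    refine himprove _ hF' hcard' ?_
    have hsub : insert u (M ∩ {v | Matched F v}) ⊆
        M ∩ {v | Matched (insert s(u,x) (F \ {e})) v} := by
      intro v hv
      rcases Set.mem_insert_iff.mp hv with rfl | hv
      · exact ⟨huM, ⟨s(v,x), Set.mem_insert _ _, Sym2.mem_mk_left v x⟩⟩
      · refine ⟨hv.1, ?_⟩
        obtain ⟨g, hgF, hvg⟩ := hv.2
        by_cases hge : g = e
        · exact absurd hv.1 (hnotM v (hge ▸ hvg))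
        · exact ⟨g, Set.mem_insert_of_mem _ ⟨hgF, hge⟩, hvg⟩
    have hunot : u ∉ M ∩ {v | Matched F v} := fun h => huF h.2
    calc (M ∩ {v | Matched F v}).ncard + 1
        = (insert u (M ∩ {v | Matched F v})).ncard :=
          (Set.ncard_insert_of_notMem hunot (Set.toFinite _)).symm
      _ ≤ _ := Set.ncard_le_ncard hsub (Set.toFinite _)
end

section
/- Let M be a nonempty module of a graph G and let F be a matching of G. Let A ⊆ M be the set of vertices of M that are matched by F to vertices outside M, and let B ⊆ V ∖ M be the set of F-partners of the vertices of A. Then every vertex of A is adjacent to every vertex of B, and for every bijection σ : A → B, the edge set obtained from F by replacing the edges of F between A and B with { {a, σ(a)} : a ∈ A } is a matching of G of the same cardinality as F. -/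
open SimpleGraph

/-- Let `M` be a nonempty module of `G` and `F` a matching of `G`. Let `A ⊆ M` be the
vertices of `M` matched by `F` to vertices outside `M`, and `B` the set of `F`-partners of
the vertices of `A`. Then every vertex of `A` is adjacent to every vertex of `B`, and for
every bijection `σ : A → B`, replacing in `F` the edges between `A` and `B` by
`{ {a, σ a} : a ∈ A }` yields a matching of `G` of the same cardinality as `F`. -/
theorem module_matching_exchange {V : Type*} [Fintype V]
    (G : SimpleGraph V) (M : Set V) (hM : IsModule G M) (hne : M.Nonempty)
    (F : Set (Sym2 V)) (hF : IsMatching G F)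
    (A B : Set V)
    (hA : A = {v | v ∈ M ∧ ∃ w, w ∉ M ∧ s(v, w) ∈ F})
    (hB : B = {w | w ∉ M ∧ ∃ v ∈ A, s(v, w) ∈ F}) :
    (∀ a ∈ A, ∀ b ∈ B, G.Adj a b) ∧
    ∀ σ : ↥A ≃ ↥B,
      IsMatching G ((F \ {e | ∃ a ∈ A, ∃ b ∈ B, e = s(a, b)}) ∪
        {e | ∃ a : ↥A, e = s((a : V), ((σ a : ↥B) : V))}) ∧
      ((F \ {e | ∃ a ∈ A, ∃ b ∈ B, e = s(a, b)}) ∪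
        {e | ∃ a : ↥A, e = s((a : V), ((σ a : ↥B) : V))}).ncard = F.ncard := by
  classical
  obtain ⟨hFsub, hFdisj⟩ := hF
  have hAmem : ∀ v, v ∈ A ↔ v ∈ M ∧ ∃ w, w ∉ M ∧ s(v, w) ∈ F := by
    intro v; rw [hA]; exact Iff.rfl
  have hBmem : ∀ w, w ∈ B ↔ w ∉ M ∧ ∃ v ∈ A, s(v, w) ∈ F := by
    intro w; rw [hB]; exact Iff.rfl
  have adjAB : ∀ a ∈ A, ∀ b ∈ B, G.Adj a b := by
    intro a ha b hb
    obtain ⟨haM, -⟩ := (hAmem a).1 ha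
    obtain ⟨hbM, v, hv, hvb⟩ := (hBmem b).1 hb
    obtain ⟨hvM, -⟩ := (hAmem v).1 hv
    exact (hM a haM v hvM b hbM).2 (G.mem_edgeSet.mp (hFsub hvb))
  have hABdisj : ∀ v, v ∈ A → v ∈ B → False := fun v hvA hvB =>
    ((hBmem v).1 hvB).1 ((hAmem v).1 hvA).1
  set EAB : Set (Sym2 V) := {e | ∃ a ∈ A, ∃ b ∈ B, e = s(a, b)} with hEAB
  have hAedge : ∀ a ∈ A, ∀ e ∈ F, a ∈ e → ∃ b ∈ B, e = s(a, b) := by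
    intro a ha e he hae
    obtain ⟨haM, w, hwM, hwF⟩ := (hAmem a).1 ha
    have heq : e = s(a, w) := hFdisj e he _ hwF a hae (Sym2.mem_mk_left a w)
    exact ⟨w, (hBmem w).2 ⟨hwM, a, ha, hwF⟩, heq⟩
  have hBedge : ∀ b ∈ B, ∀ e ∈ F, b ∈ e → ∃ a ∈ A, e = s(a, b) := by
    intro b hb e he hbe
    obtain ⟨hbM, v, hvA, hvF⟩ := (hBmem b).1 hb
    exact ⟨v, hvA, hFdisj e he _ hvF b hbe (Sym2.mem_mk_right v b)⟩
  have hFDno : ∀ e ∈ F \ EAB, ∀ v ∈ e, v ∉ A ∧ v ∉ B := by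
    rintro e ⟨heF, heEAB⟩ v hv
    constructor
    · intro hvA
      obtain ⟨b, hb, heq⟩ := hAedge v hvA e heF hv
      exact heEAB ⟨v, hvA, b, hb, heq⟩
    · intro hvB
      obtain ⟨a, haA, heq⟩ := hBedge v hvB e heF hv
      exact heEAB ⟨a, haA, v, hvB, heq⟩
  refine ⟨adjAB, fun σ => ?_⟩
  set f : ↥A → Sym2 V := fun a => s((a : V), ((σ a : ↥B) : V)) with hfdef
  set S : Set (Sym2 V) := {e | ∃ a : ↥A, e = s((a : V), ((σ a : ↥B) : V))} with hSdef
  have hmemS : ∀ e ∈ S, ∃ a : ↥A, e = f a := fun e he => he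
  have hfinj : Function.Injective f := by
    intro a a' heq
    rw [hfdef, Sym2.eq_iff] at heq
    rcases heq with ⟨h1, -⟩ | ⟨h1, h2⟩
    · exact Subtype.ext h1
    · exact absurd (σ a').2 (fun hb => hABdisj _ a.2 (h1 ▸ hb))
  have hSrange : S = Set.range f := by
    ext e; simp only [hSdef, Set.mem_setOf_eq, Set.mem_range, hfdef, eq_comm]
  constructor
  · constructor
    · intro e he
      rcases he with ⟨heF, -⟩ | ⟨a, rfl⟩
      · exact hFsub heF
      · exact G.mem_edgeSet.mpr (adjAB a a.2 _ (σ a).2)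
    · intro e he f' hf' v hve hvf
      rcases he with heFD | ⟨a, rfl⟩ <;> rcases hf' with hfFD | hfS
      · exact hFdisj e heFD.1 f' hfFD.1 v hve hvf
      · obtain ⟨a, rfl⟩ := hfS
        rw [Sym2.mem_iff] at hvf
        rcases hvf with rfl | rfl
        · exact absurd a.2 (hFDno e heFD _ hve).1
        · exact absurd (σ a).2 (hFDno e heFD _ hve).2
      · rw [Sym2.mem_iff] at hve
        rcases hve with rfl | rfl
        · exact absurd a.2 (hFDno f' hfFD _ hvf).1
        · exact absurd (σ a).2 (hFDno f' hfFD _ hvf).2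
      · obtain ⟨a', rfl⟩ := hfS
        rw [Sym2.mem_iff] at hve hvf
        rcases hve with rfl | rfl <;> rcases hvf with h | h
        · rw [Subtype.ext h]
        · exact absurd (σ a').2 (fun hb => hABdisj _ a.2 (h ▸ hb))
        · exact absurd (σ a).2 (fun hb => hABdisj _ a'.2 (h ▸ hb))
        · rw [σ.injective (Subtype.ext h)]
  · set g : ↥A → Sym2 V :=
      fun a => s((a : V), Classical.choose (((hAmem a).1 a.2).2)) with hgdef
    have hgspec : ∀ a : ↥A, Classical.choose (((hAmem a).1 a.2).2) ∉ M ∧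
        s((a : V), Classical.choose (((hAmem a).1 a.2).2)) ∈ F :=
      fun a => Classical.choose_spec (((hAmem a).1 a.2).2)
    have hginter : Set.range g = F ∩ EAB := by
      ext e
      constructor
      · rintro ⟨a, rfl⟩
        obtain ⟨hwM, hwF⟩ := hgspec a
        exact ⟨hwF, a, a.2, _, (hBmem _).2 ⟨hwM, a, a.2, hwF⟩, rfl⟩
      · rintro ⟨heF, a, haA, b, hbB, rfl⟩
        refine ⟨⟨a, haA⟩, ?_⟩
        obtain ⟨hwM, hwF⟩ := hgspec ⟨a, haA⟩
        exact hFdisj _ hwF _ heF a (Sym2.mem_mk_left _ _) (Sym2.mem_mk_left _ _)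
    have hginj : Function.Injective g := by
      intro a a' heq
      rw [hgdef, Sym2.eq_iff] at heq
      rcases heq with ⟨h1, -⟩ | ⟨h1, h2⟩
      · exact Subtype.ext h1
      · exact absurd ((hAmem _).1 a'.2).1 (h2 ▸ (hgspec a).1)
    have hSncard : S.ncard = Nat.card ↥A := by
      rw [hSrange, ← Nat.card_coe_set_eq]
      exact Nat.card_congr (Equiv.ofInjective f hfinj).symm
    have hFABncard : (F ∩ EAB).ncard = Nat.card ↥A := by
      rw [← hginter, ← Nat.card_coe_set_eq]
      exact Nat.card_congr (Equiv.ofInjective g hginj).symm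
    have hdisj1 : Disjoint (F \ EAB) S := by
      rw [Set.disjoint_left]
      rintro e heFD ⟨a, rfl⟩
      exact (hFDno _ heFD _ (Sym2.mem_mk_left _ _)).1 a.2
    have hdisj2 : Disjoint (F \ EAB) (F ∩ EAB) := by
      rw [Set.disjoint_left]
      rintro e ⟨-, heEAB⟩ ⟨-, h⟩
      exact heEAB h
    calc ((F \ EAB) ∪ S).ncard
        = (F \ EAB).ncard + S.ncard :=
          Set.ncard_union_eq hdisj1 (Set.toFinite _) (Set.toFinite _)
      _ = (F \ EAB).ncard + (F ∩ EAB).ncard := by rw [hSncard, hFABncard]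
      _ = ((F \ EAB) ∪ (F ∩ EAB)).ncard :=
          (Set.ncard_union_eq hdisj2 (Set.toFinite _) (Set.toFinite _)).symm
      _ = F.ncard := by rw [Set.diff_union_inter]
end

section
/- Every graph in the class C1 ∪ C2 ∪ C3 can be reduced to a single vertex by repeatedly deleting a one-vertex extension of the current graph. -/
open SimpleGraph

/-- The elementary adjacency condition (0-indexed): the earlier neighbourhood of `v_k` is
`{v_j : j + 1 < k}` when `k` is even (i.e. the 1-indexed position `k+1` is odd) and
`{v_{k-1}}` when `k` is odd. -/
def elemCond (k j : ℕ) : Prop :=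
  j < k ∧ (if Even k then j + 1 < k else j + 1 = k)

/-- The defining relation of the graph of class `C_{c+1}` (`c : Fin 3`) built on an
elementary graph with vertices `Sum.inl k` (`k : Fin n`, 0-indexed, so `v_i = inl (i-1)`)
together with the three added vertices `p = inr 0`, `q = inr 1`, `r = inr 2`. -/
def CRel (c : Fin 3) (n : ℕ) : (Fin n ⊕ Fin 3) → (Fin n ⊕ Fin 3) → Prop
  | Sum.inl k, Sum.inl j => elemCond (k : ℕ) (j : ℕ)
  | Sum.inr t, Sum.inl k =>
      -- for all three classes: p, q, r adjacent to v_i for every odd i > 1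
      (Even (k : ℕ) ∧ 2 ≤ (k : ℕ)) ∨
      -- C1: {v1, q} and {v2, p}
      (c = 0 ∧ ((t = 1 ∧ (k : ℕ) = 0) ∨ (t = 0 ∧ (k : ℕ) = 1))) ∨
      -- C2: {v1, q} and {v2, r}
      (c = 1 ∧ ((t = 1 ∧ (k : ℕ) = 0) ∨ (t = 2 ∧ (k : ℕ) = 1))) ∨
      -- C3: {v1, r}
      (c = 2 ∧ (t = 2 ∧ (k : ℕ) = 0))
  | Sum.inl _, Sum.inr _ => False
  | Sum.inr s, Sum.inr t =>
      -- C1: {p, r};  C2: {p, q}, {p, r}, {q, r};  C3: {p, q}, {p, r}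
      (c = 0 ∧ (s = 0 ∧ t = 2)) ∨
      (c = 1 ∧ s ≠ t) ∨
      (c = 2 ∧ ((s = 0 ∧ t = 1) ∨ (s = 0 ∧ t = 2)))

/-- The graph of class `C_{c+1}` obtained from the elementary graph on `n` vertices by
adding the three vertices `p, q, r` and the prescribed edges. -/
def CGraph (c : Fin 3) (n : ℕ) : SimpleGraph (Fin n ⊕ Fin 3) :=
  SimpleGraph.fromRel (CRel c n)

/-- One pruning step: delete from the current induced subgraph `G[S]` a vertex that is a
one-vertex extension of `G[S]`. -/
def OVEStep {V : Type*} (G : SimpleGraph V) (S T : Set V) : Prop :=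
  ∃ (x : V) (h : x ∈ S), OneVertexExtension (G.induce S) ⟨x, h⟩ ∧ T = S \ {x}

section Transfer
variable {V W : Type*} {G : SimpleGraph V} {H : SimpleGraph W}

lemma nbhd_map (f : G ≃g H) (w : V) :
    H.neighborSet (f w) = f.symm ⁻¹' (G.neighborSet w) := by
  ext y
  simp only [Set.mem_preimage, mem_neighborSet]
  constructor
  · intro hy
    have := f.map_rel_iff (a := w) (b := f.symm y)
    rw [RelIso.apply_symm_apply] at this
    exact this.mp hy
  · intro hy
    have := f.map_rel_iff (a := w) (b := f.symm y)
    rw [RelIso.apply_symm_apply] at this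
    exact this.mpr hy

lemma closed_nbhd_map (f : G ≃g H) (w : V) :
    insert (f w) (H.neighborSet (f w)) = f.symm ⁻¹' (insert w (G.neighborSet w)) := by
  rw [nbhd_map f w]
  ext y
  simp only [Set.mem_insert_iff, Set.mem_preimage, mem_neighborSet]
  constructor
  · rintro (rfl | h)
    · left; simp
    · right; exact h
  · rintro (h | h)
    · left; rw [← h]; simp
    · right; exact h

lemma ove_map_s14 (f : G ≃g H) (v : V) (h : OneVertexExtension G v) :
    OneVertexExtension H (f v) := by
  rcases h with h | h | ⟨u, hu, h⟩ | ⟨u, hu, h⟩ | ⟨u, hu, h⟩ | ⟨u, hu, h⟩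
  · left; rw [closed_nbhd_map, h]; simp
  · right; left; rw [nbhd_map, h]; simp
  · right; right; left
    refine ⟨f u, by simpa using fun hh => hu (f.injective hh), ?_⟩
    rw [closed_nbhd_map, h]
    ext y
    simp only [Set.mem_preimage, Set.mem_compl_iff, Set.mem_singleton_iff]
    exact not_congr ⟨fun hh => by rw [← hh, RelIso.apply_symm_apply], fun hh => by rw [hh, RelIso.symm_apply_apply]⟩
  · right; right; right; left
    refine ⟨f u, by simpa using fun hh => hu (f.injective hh), ?_⟩
    rw [nbhd_map, h]
    ext y
    simp only [Set.mem_preimage, Set.mem_singleton_iff]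
    exact ⟨fun hh => by rw [← hh, RelIso.apply_symm_apply], fun hh => by rw [hh, RelIso.symm_apply_apply]⟩
  · right; right; right; right; left
    refine ⟨f u, by simpa using fun hh => hu (f.injective hh), ?_⟩
    rw [closed_nbhd_map, closed_nbhd_map, h]
  · right; right; right; right; right
    refine ⟨f u, by simpa using fun hh => hu (f.injective hh), ?_⟩
    rw [nbhd_map, nbhd_map, h]

/-- restriction of an iso to an induced subgraph -/
def isoInduce (f : G ≃g H) (S : Set V) : G.induce S ≃g H.induce (f '' S) where
  toEquiv := f.toEquiv.image S
  map_rel_iff' := by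
    intro a b
    simp [Equiv.image, comap_adj, f.map_rel_iff]

lemma ovestep_map (f : G ≃g H) {S T : Set V} (h : OVEStep G S T) :
    OVEStep H (f '' S) (f '' T) := by
  obtain ⟨x, hx, hove, hT⟩ := h
  refine ⟨f x, ⟨x, hx, rfl⟩, ?_, ?_⟩
  · have := ove_map_s14 (isoInduce f S) ⟨x, hx⟩ hove
    exact this
  · rw [hT, Set.image_diff f.injective, Set.image_singleton]

end Transfer

section Steps
variable {V : Type*} {G : SimpleGraph V}

lemma pendant_step {S T : Set V} {x u : V} (hx : x ∈ S) (hu : u ∈ S)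
    (hchar : ∀ y ∈ S, G.Adj x y ↔ y = u) (hT : T = S \ {x}) : OVEStep G S T := by
  refine ⟨x, hx, Or.inr (Or.inr (Or.inr (Or.inl ⟨⟨u, hu⟩, ?_, ?_⟩))), hT⟩
  · intro h
    have hxu : u = x := congrArg Subtype.val h
    exact G.irrefl (hxu ▸ (hchar u hu).mpr rfl)
  · ext ⟨y, hy⟩
    simp only [mem_neighborSet, comap_adj, Function.Embedding.coe_subtype,
      Set.mem_singleton_iff, Subtype.mk.injEq]
    exact hchar y hy

lemma antipendant_step {S T : Set V} {x u : V} (hx : x ∈ S) (hu : u ∈ S) (hne : u ≠ x)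
    (hchar : ∀ y ∈ S, y ≠ x → (G.Adj x y ↔ y ≠ u)) (hT : T = S \ {x}) : OVEStep G S T := by
  refine ⟨x, hx, Or.inr (Or.inr (Or.inl ⟨⟨u, hu⟩, ?_, ?_⟩)), hT⟩
  · intro h; exact hne (congrArg Subtype.val h)
  · ext ⟨y, hy⟩
    simp only [Set.mem_insert_iff, mem_neighborSet, comap_adj, Function.Embedding.coe_subtype,
      Set.mem_compl_iff, Set.mem_singleton_iff, Subtype.mk.injEq]
    by_cases hyx : y = x
    · subst hyx
      simp only [true_or, true_iff]
      exact fun h => hne h.symm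
    · simp only [hyx, false_or]
      exact hchar y hy hyx

end Steps

/-- the sets occurring in the pruning sequence -/
def BSet (n : ℕ) (A : Set ℕ) (B : Set (Fin 3)) : Set (Fin n ⊕ Fin 3) :=
  Sum.elim (fun k => (k : ℕ) ∈ A) (fun t => t ∈ B)

lemma mem_BSet_inl {n : ℕ} {A : Set ℕ} {B : Set (Fin 3)} {k : Fin n} :
    Sum.inl k ∈ BSet n A B ↔ (k : ℕ) ∈ A := Iff.rfl

lemma mem_BSet_inr {n : ℕ} {A : Set ℕ} {B : Set (Fin 3)} {t : Fin 3} :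
    Sum.inr t ∈ BSet n A B ↔ t ∈ B := Iff.rfl

lemma BSet_diff_inl {n : ℕ} {A A' : Set ℕ} {B : Set (Fin 3)} {k : Fin n}
    (h : ∀ j, j < n → (j ∈ A ∧ j ≠ (k : ℕ) ↔ j ∈ A')) :
    BSet n A B \ {Sum.inl k} = BSet n A' B := by
  ext y
  cases y with
  | inl j =>
    simp only [Set.mem_diff, mem_BSet_inl, Set.mem_singleton_iff, Sum.inl.injEq]
    rw [← h j j.isLt]
    constructor
    · rintro ⟨h1, h2⟩; exact ⟨h1, fun hh => h2 (Fin.ext hh)⟩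
    · rintro ⟨h1, h2⟩; exact ⟨h1, fun hh => h2 (congrArg Fin.val hh)⟩
  | inr t => simp only [Set.mem_diff, Set.mem_singleton_iff, reduceCtorEq, not_false_iff, and_true]; exact Iff.rfl

lemma BSet_diff_inr {n : ℕ} {A : Set ℕ} {B B' : Set (Fin 3)} {t : Fin 3}
    (h : ∀ s : Fin 3, s ∈ B ∧ s ≠ t ↔ s ∈ B') :
    BSet n A B \ {Sum.inr t} = BSet n A B' := by
  ext y
  cases y with
  | inl j => simp only [Set.mem_diff, Set.mem_singleton_iff, reduceCtorEq, not_false_iff, and_true]; exact Iff.rfl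
  | inr s =>
    simp only [Set.mem_diff, mem_BSet_inr, Set.mem_singleton_iff, Sum.inr.injEq]
    exact h s

lemma cgraph_adj {c : Fin 3} {n : ℕ} {x y : Fin n ⊕ Fin 3} :
    (CGraph c n).Adj x y ↔ x ≠ y ∧ (CRel c n x y ∨ CRel c n y x) :=
  SimpleGraph.fromRel_adj _ _ _

lemma elemCond_of_even {k j : ℕ} (hk : Even k) : elemCond k j ↔ j + 1 < k := by
  unfold elemCond; rw [if_pos hk]; omega

lemma elemCond_of_odd {k j : ℕ} (hk : ¬ Even k) : elemCond k j ↔ j + 1 = k := by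
  unfold elemCond; rw [if_neg hk]; omega

lemma not_elemCond_of_le {k j : ℕ} (h : k ≤ j) : ¬ elemCond k j := by
  intro hh; exact absurd hh.1 (by omega)

lemma not_crel_inr_inl (c : Fin 3) {n : ℕ} (t : Fin 3) (k : Fin n)
    (hodd : ¬ Even (k : ℕ)) (hk : 2 ≤ (k : ℕ)) : ¬ CRel c n (Sum.inr t) (Sum.inl k) := by
  rintro (⟨he, -⟩ | ⟨-, (⟨-, h⟩ | ⟨-, h⟩)⟩ | ⟨-, (⟨-, h⟩ | ⟨-, h⟩)⟩ | ⟨-, -, h⟩)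
  · exact hodd he
  all_goals omega

lemma descent_step (c : Fin 3) (n m : ℕ) (h2 : 2 ≤ m) (hmn : m < n) :
    OVEStep (CGraph c n) (BSet n {k | k < m + 1} Set.univ) (BSet n {k | k < m} Set.univ) := by
  have hm1 : m - 1 < n := by omega
  have hT : BSet n {k | k < m} Set.univ
      = BSet n {k | k < m + 1} Set.univ \ {Sum.inl (⟨m, hmn⟩ : Fin n)} := by
    symm; apply BSet_diff_inl; intro j _; simp only [Set.mem_setOf_eq]; omega
  rcases Nat.even_or_odd m with hm | hm
  · -- m even : anti-pendant, missing only inl (m-1)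
    apply antipendant_step (x := Sum.inl ⟨m, hmn⟩) (u := Sum.inl ⟨m - 1, hm1⟩)
      (by show m < m + 1; omega) (by show m - 1 < m + 1; omega)
      (by simp only [ne_eq, Sum.inl.injEq, Fin.ext_iff]; omega) ?_ hT
    intro y hy hyx
    cases y with
    | inl j =>
      have hj : (j : ℕ) < m + 1 := hy
      have hjm : (j : ℕ) ≠ m := fun hh => hyx (by simp [Sum.inl.injEq, Fin.ext_iff, hh])
      rw [cgraph_adj]
      have h1 : ¬ elemCond (j : ℕ) m := not_elemCond_of_le (by omega)
      simp only [CRel, elemCond_of_even hm, h1, or_false, ne_eq, Sum.inl.injEq, Fin.ext_iff]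
      omega
    | inr t =>
      constructor
      · intro _; simp
      · intro _
        rw [cgraph_adj]
        refine ⟨by simp, Or.inr ?_⟩
        exact Or.inl ⟨hm, h2⟩
  · -- m odd : pendant on inl (m-1)
    apply pendant_step (x := Sum.inl ⟨m, hmn⟩) (u := Sum.inl ⟨m - 1, hm1⟩)
      (by show m < m + 1; omega) (by show m - 1 < m + 1; omega) ?_ hT
    intro y hy
    have hmo : ¬ Even m := by simpa [Nat.even_iff, Nat.odd_iff.mp hm] using (by omega : ¬ m % 2 = 0)
    cases y with
    | inl j =>
      have hj : (j : ℕ) < m + 1 := hy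
      rw [cgraph_adj]
      have h1 : ¬ elemCond (j : ℕ) m := not_elemCond_of_le (by omega)
      simp only [CRel, elemCond_of_odd hmo, h1, or_false, ne_eq, Sum.inl.injEq, Fin.ext_iff]
      omega
    | inr t =>
      rw [cgraph_adj]
      simp only [ne_eq, reduceCtorEq, not_false_iff, true_and]
      constructor
      · rintro (h | h)
        · exact absurd h (by simp [CRel])
        · exact absurd h (not_crel_inr_inl c t ⟨m, hmn⟩ hmo h2)
      · intro h; exact absurd h (by simp)

lemma descent (c : Fin 3) (n : ℕ) : ∀ m, 2 ≤ m → m ≤ n →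
    Relation.ReflTransGen (OVEStep (CGraph c n))
      (BSet n {k | k < m} Set.univ) (BSet n {k | k < 2} Set.univ) := by
  intro m
  induction m with
  | zero => omega
  | succ m ih =>
    intro h2 hmn
    rcases eq_or_lt_of_le h2 with heq | hlt
    · obtain rfl : m = 1 := by omega
      exact Relation.ReflTransGen.refl
    · exact Relation.ReflTransGen.head (descent_step c n m (by omega) (by omega))
        (ih (by omega) (by omega))

lemma BSet_univ (n : ℕ) : (Set.univ : Set (Fin n ⊕ Fin 3)) = BSet n {k | k < n} Set.univ := by
  ext y
  cases y with
  | inl j => simp only [Set.mem_univ, true_iff]; exact j.isLt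
  | inr t => simp only [Set.mem_univ, true_iff]; exact Set.mem_univ t

lemma cgraph_decomp (c : Fin 3) (n : ℕ) (hn : 2 ≤ n) :
    ∃ x, Relation.ReflTransGen (OVEStep (CGraph c n)) Set.univ {x} := by
  have h0 : 0 < n := by omega
  have h1 : 1 < n := by omega
  have hstart : Relation.ReflTransGen (OVEStep (CGraph c n)) Set.univ
      (BSet n {k | k < 2} Set.univ) := by
    rw [BSet_univ n]; exact descent c n n hn le_rfl
  have hA2 : ({k | k < 2} : Set ℕ) = {0, 1} := by ext j; simp; omega
  rw [hA2] at hstart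
  have e0 : ((⟨0, h0⟩ : Fin n) : ℕ) = 0 := rfl
  have e1 : ((⟨1, h1⟩ : Fin n) : ℕ) = 1 := rfl
  -- last step, common shape for c = 1, 2: delete `inl 1`, pendant on `inl 0`
  have lastL : OVEStep (CGraph c n) (BSet n {0, 1} (∅ : Set (Fin 3)))
      {Sum.inl (⟨0, h0⟩ : Fin n)} := by
    apply pendant_step (x := Sum.inl (⟨1, h1⟩ : Fin n)) (u := Sum.inl (⟨0, h0⟩ : Fin n))
      (by right; rfl) (by left; rfl) ?_ ?_
    · intro y hy
      cases y with
      | inl j =>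
        have hy' : (j : ℕ) = 0 ∨ (j : ℕ) = 1 := hy
        rw [cgraph_adj]
        simp only [CRel, elemCond, ne_eq, Sum.inl.injEq, Fin.ext_iff, Nat.even_iff, e0, e1]
        rcases hy' with h | h <;> simp [h]
      | inr t => exact hy.elim
    · refine Eq.trans ?_ (BSet_diff_inl (A' := {0}) ?_).symm
      · ext y
        cases y with
        | inl j =>
          simp only [Set.mem_singleton_iff, Sum.inl.injEq, Fin.ext_iff, mem_BSet_inl,
            Set.mem_singleton_iff, e0]
        | inr t =>
          simp only [Set.mem_singleton_iff, reduceCtorEq, false_iff]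
          exact fun h => h
      · intro j _; simp only [Set.mem_insert_iff, Set.mem_singleton_iff, e1]; omega
  fin_cases c
  · -- c = 0
    refine ⟨Sum.inr 1, hstart.trans ?_⟩
    have s1 : OVEStep (CGraph 0 n) (BSet n {0, 1} (Set.univ : Set (Fin 3))) (BSet n {0, 1} ({0, 1} : Set (Fin 3))) := by
      apply pendant_step (x := Sum.inr (2 : Fin 3)) (u := Sum.inr (0 : Fin 3)) (by trivial) (by trivial) ?_ ?_
      · intro y hy
        cases y with
      | inl j =>
        have hy' : (j : ℕ) = 0 ∨ (j : ℕ) = 1 := hy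
        rw [cgraph_adj]
        simp only [CRel, elemCond, ne_eq, Sum.inl.injEq, Sum.inr.injEq, Fin.ext_iff,
          reduceCtorEq, Nat.even_iff, e0, e1, Fin.isValue]
        rcases hy' with h | h <;> simp [h]
      | inr t =>
        revert hy
        rw [cgraph_adj]
        simp only [CRel, mem_BSet_inr, Set.mem_insert_iff, Set.mem_singleton_iff,
          Set.mem_univ, ne_eq, Sum.inr.injEq, Sum.inl.injEq, reduceCtorEq, Fin.isValue,
          Fin.ext_iff, e0, e1, Nat.even_iff]
        revert t
        decide
      · exact (BSet_diff_inr (B' := ({0, 1} : Set (Fin 3))) (by intro s; fin_cases s <;> simp)).symm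
    have s2 : OVEStep (CGraph 0 n) (BSet n {0, 1} ({0, 1} : Set (Fin 3))) (BSet n {0, 1} ({1} : Set (Fin 3))) := by
      apply pendant_step (x := Sum.inr (0 : Fin 3)) (u := Sum.inl (⟨1, h1⟩ : Fin n)) (by left; rfl) (by right; rfl) ?_ ?_
      · intro y hy
        cases y with
      | inl j =>
        have hy' : (j : ℕ) = 0 ∨ (j : ℕ) = 1 := hy
        rw [cgraph_adj]
        simp only [CRel, elemCond, ne_eq, Sum.inl.injEq, Sum.inr.injEq, Fin.ext_iff,
          reduceCtorEq, Nat.even_iff, e0, e1, Fin.isValue]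
        rcases hy' with h | h <;> simp [h]
      | inr t =>
        revert hy
        rw [cgraph_adj]
        simp only [CRel, mem_BSet_inr, Set.mem_insert_iff, Set.mem_singleton_iff,
          Set.mem_univ, ne_eq, Sum.inr.injEq, Sum.inl.injEq, reduceCtorEq, Fin.isValue,
          Fin.ext_iff, e0, e1, Nat.even_iff]
        revert t
        decide
      · exact (BSet_diff_inr (B' := ({1} : Set (Fin 3))) (by intro s; fin_cases s <;> simp)).symm
    have s3 : OVEStep (CGraph 0 n) (BSet n {0, 1} ({1} : Set (Fin 3))) (BSet n {(0 : ℕ)} ({1} : Set (Fin 3))) := by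
      apply pendant_step (x := Sum.inl (⟨1, h1⟩ : Fin n)) (u := Sum.inl (⟨0, h0⟩ : Fin n)) (by right; rfl) (by left; rfl) ?_ ?_
      · intro y hy
        cases y with
      | inl j =>
        have hy' : (j : ℕ) = 0 ∨ (j : ℕ) = 1 := hy
        rw [cgraph_adj]
        simp only [CRel, elemCond, ne_eq, Sum.inl.injEq, Sum.inr.injEq, Fin.ext_iff,
          reduceCtorEq, Nat.even_iff, e0, e1, Fin.isValue]
        rcases hy' with h | h <;> simp [h]
      | inr t =>
        revert hy
        rw [cgraph_adj]
        simp only [CRel, mem_BSet_inr, Set.mem_insert_iff, Set.mem_singleton_iff,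
          Set.mem_univ, ne_eq, Sum.inr.injEq, Sum.inl.injEq, reduceCtorEq, Fin.isValue,
          Fin.ext_iff, e0, e1, Nat.even_iff]
        revert t
        decide
      · refine Eq.trans ?_ (BSet_diff_inl (A' := {(0 : ℕ)}) ?_).symm
        · ext y
          cases y <;>
            simp [mem_BSet_inl, mem_BSet_inr, BSet, Fin.ext_iff, e0, e1]
        · intro j hj
          simp only [Set.mem_insert_iff, Set.mem_singleton_iff, Set.mem_empty_iff_false, e0, e1]
          omega
    have s4 : OVEStep (CGraph 0 n) (BSet n {(0 : ℕ)} ({1} : Set (Fin 3))) ({Sum.inr (1 : Fin 3)} : Set (Fin n ⊕ Fin 3)) := by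
      apply pendant_step (x := Sum.inl (⟨0, h0⟩ : Fin n)) (u := Sum.inr (1 : Fin 3)) (by rfl) (by rfl) ?_ ?_
      · intro y hy
        cases y with
        | inl j =>
          have hy0 : (j : ℕ) = 0 := hy
          rw [cgraph_adj]
          simp [CRel, elemCond, Sum.inl.injEq, Fin.ext_iff, e0, e1, hy0]
        | inr t =>
          revert hy
          rw [cgraph_adj]
          simp only [CRel, mem_BSet_inr, Set.mem_insert_iff, Set.mem_singleton_iff,
            Set.mem_univ, ne_eq, Sum.inr.injEq, Sum.inl.injEq, reduceCtorEq, Fin.isValue,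
            Fin.ext_iff, e0, e1, Nat.even_iff]
          revert t
          decide
      · refine Eq.trans ?_ (BSet_diff_inl (A' := (∅ : Set ℕ)) ?_).symm
        · ext y
          cases y with
          | inl j =>
            constructor
            · intro h; exact absurd h (by simp)
            · intro h; exact h.elim
          | inr t =>
            constructor
            · intro h
              have ht : Sum.inr (1 : Fin 3) = Sum.inr t := h.symm
              have : (1 : Fin 3) = t := by injection ht
              exact (this ▸ rfl : (t : Fin 3) ∈ ({1} : Set (Fin 3)))
            · intro h
              have ht : t = (1 : Fin 3) := h
              rw [ht]; rfl
        · intro j hj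
          constructor
          · rintro ⟨ha, hb⟩
            exact absurd (show j = 0 from ha) (by rw [← e0] at *; exact hb)
          · intro h; exact h.elim
    exact Relation.ReflTransGen.head s1 (Relation.ReflTransGen.head s2 (Relation.ReflTransGen.head s3 (Relation.ReflTransGen.head s4 Relation.ReflTransGen.refl)))
  · -- c = 1
    refine ⟨Sum.inl (⟨0, h0⟩ : Fin n), hstart.trans ?_⟩
    have s1 : OVEStep (CGraph 1 n) (BSet n {0, 1} (Set.univ : Set (Fin 3))) (BSet n {0, 1} ({0, 2} : Set (Fin 3))) := by
      apply antipendant_step (x := Sum.inr (1 : Fin 3)) (u := Sum.inl (⟨1, h1⟩ : Fin n)) (by trivial)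
        (by right; rfl) (by simp) ?_ ?_
      · intro y hy hyx
        cases y with
      | inl j =>
        have hy' : (j : ℕ) = 0 ∨ (j : ℕ) = 1 := hy
        rw [cgraph_adj]
        simp only [CRel, elemCond, ne_eq, Sum.inl.injEq, Sum.inr.injEq, Fin.ext_iff,
          reduceCtorEq, Nat.even_iff, e0, e1, Fin.isValue]
        rcases hy' with h | h <;> simp [h]
      | inr t =>
        revert hy hyx
        rw [cgraph_adj]
        simp only [CRel, mem_BSet_inr, Set.mem_insert_iff, Set.mem_singleton_iff,
          Set.mem_univ, ne_eq, Sum.inr.injEq, Sum.inl.injEq, reduceCtorEq, Fin.isValue,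
          Fin.ext_iff, e0, e1, Nat.even_iff]
        revert t
        decide
      · exact (BSet_diff_inr (B' := ({0, 2} : Set (Fin 3))) (by intro s; fin_cases s <;> simp)).symm
    have s2 : OVEStep (CGraph 1 n) (BSet n {0, 1} ({0, 2} : Set (Fin 3))) (BSet n {0, 1} ({2} : Set (Fin 3))) := by
      apply pendant_step (x := Sum.inr (0 : Fin 3)) (u := Sum.inr (2 : Fin 3)) (by left; rfl) (by right; rfl) ?_ ?_
      · intro y hy
        cases y with
      | inl j =>
        have hy' : (j : ℕ) = 0 ∨ (j : ℕ) = 1 := hy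
        rw [cgraph_adj]
        simp only [CRel, elemCond, ne_eq, Sum.inl.injEq, Sum.inr.injEq, Fin.ext_iff,
          reduceCtorEq, Nat.even_iff, e0, e1, Fin.isValue]
        rcases hy' with h | h <;> simp [h]
      | inr t =>
        revert hy
        rw [cgraph_adj]
        simp only [CRel, mem_BSet_inr, Set.mem_insert_iff, Set.mem_singleton_iff,
          Set.mem_univ, ne_eq, Sum.inr.injEq, Sum.inl.injEq, reduceCtorEq, Fin.isValue,
          Fin.ext_iff, e0, e1, Nat.even_iff]
        revert t
        decide
      · exact (BSet_diff_inr (B' := ({2} : Set (Fin 3))) (by intro s; fin_cases s <;> simp)).symm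
    have s3 : OVEStep (CGraph 1 n) (BSet n {0, 1} ({2} : Set (Fin 3))) (BSet n {0, 1} (∅ : Set (Fin 3))) := by
      apply pendant_step (x := Sum.inr (2 : Fin 3)) (u := Sum.inl (⟨1, h1⟩ : Fin n)) (by rfl) (by right; rfl) ?_ ?_
      · intro y hy
        cases y with
      | inl j =>
        have hy' : (j : ℕ) = 0 ∨ (j : ℕ) = 1 := hy
        rw [cgraph_adj]
        simp only [CRel, elemCond, ne_eq, Sum.inl.injEq, Sum.inr.injEq, Fin.ext_iff,
          reduceCtorEq, Nat.even_iff, e0, e1, Fin.isValue]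
        rcases hy' with h | h <;> simp [h]
      | inr t =>
        revert hy
        rw [cgraph_adj]
        simp only [CRel, mem_BSet_inr, Set.mem_insert_iff, Set.mem_singleton_iff,
          Set.mem_univ, ne_eq, Sum.inr.injEq, Sum.inl.injEq, reduceCtorEq, Fin.isValue,
          Fin.ext_iff, e0, e1, Nat.even_iff]
        revert t
        decide
      · exact (BSet_diff_inr (B' := (∅ : Set (Fin 3))) (by intro s; fin_cases s <;> simp)).symm
    exact Relation.ReflTransGen.head s1 (Relation.ReflTransGen.head s2 (Relation.ReflTransGen.head s3 (Relation.ReflTransGen.head lastL Relation.ReflTransGen.refl)))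
  · -- c = 2
    refine ⟨Sum.inl (⟨0, h0⟩ : Fin n), hstart.trans ?_⟩
    have s1 : OVEStep (CGraph 2 n) (BSet n {0, 1} (Set.univ : Set (Fin 3))) (BSet n {0, 1} ({0, 2} : Set (Fin 3))) := by
      apply pendant_step (x := Sum.inr (1 : Fin 3)) (u := Sum.inr (0 : Fin 3)) (by trivial) (by trivial) ?_ ?_
      · intro y hy
        cases y with
      | inl j =>
        have hy' : (j : ℕ) = 0 ∨ (j : ℕ) = 1 := hy
        rw [cgraph_adj]
        simp only [CRel, elemCond, ne_eq, Sum.inl.injEq, Sum.inr.injEq, Fin.ext_iff,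
          reduceCtorEq, Nat.even_iff, e0, e1, Fin.isValue]
        rcases hy' with h | h <;> simp [h]
      | inr t =>
        revert hy
        rw [cgraph_adj]
        simp only [CRel, mem_BSet_inr, Set.mem_insert_iff, Set.mem_singleton_iff,
          Set.mem_univ, ne_eq, Sum.inr.injEq, Sum.inl.injEq, reduceCtorEq, Fin.isValue,
          Fin.ext_iff, e0, e1, Nat.even_iff]
        revert t
        decide
      · exact (BSet_diff_inr (B' := ({0, 2} : Set (Fin 3))) (by intro s; fin_cases s <;> simp)).symm
    have s2 : OVEStep (CGraph 2 n) (BSet n {0, 1} ({0, 2} : Set (Fin 3))) (BSet n {0, 1} ({2} : Set (Fin 3))) := by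
      apply pendant_step (x := Sum.inr (0 : Fin 3)) (u := Sum.inr (2 : Fin 3)) (by left; rfl) (by right; rfl) ?_ ?_
      · intro y hy
        cases y with
      | inl j =>
        have hy' : (j : ℕ) = 0 ∨ (j : ℕ) = 1 := hy
        rw [cgraph_adj]
        simp only [CRel, elemCond, ne_eq, Sum.inl.injEq, Sum.inr.injEq, Fin.ext_iff,
          reduceCtorEq, Nat.even_iff, e0, e1, Fin.isValue]
        rcases hy' with h | h <;> simp [h]
      | inr t =>
        revert hy
        rw [cgraph_adj]
        simp only [CRel, mem_BSet_inr, Set.mem_insert_iff, Set.mem_singleton_iff,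
          Set.mem_univ, ne_eq, Sum.inr.injEq, Sum.inl.injEq, reduceCtorEq, Fin.isValue,
          Fin.ext_iff, e0, e1, Nat.even_iff]
        revert t
        decide
      · exact (BSet_diff_inr (B' := ({2} : Set (Fin 3))) (by intro s; fin_cases s <;> simp)).symm
    have s3 : OVEStep (CGraph 2 n) (BSet n {0, 1} ({2} : Set (Fin 3))) (BSet n {0, 1} (∅ : Set (Fin 3))) := by
      apply pendant_step (x := Sum.inr (2 : Fin 3)) (u := Sum.inl (⟨0, h0⟩ : Fin n)) (by rfl) (by left; rfl) ?_ ?_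
      · intro y hy
        cases y with
      | inl j =>
        have hy' : (j : ℕ) = 0 ∨ (j : ℕ) = 1 := hy
        rw [cgraph_adj]
        simp only [CRel, elemCond, ne_eq, Sum.inl.injEq, Sum.inr.injEq, Fin.ext_iff,
          reduceCtorEq, Nat.even_iff, e0, e1, Fin.isValue]
        rcases hy' with h | h <;> simp [h]
      | inr t =>
        revert hy
        rw [cgraph_adj]
        simp only [CRel, mem_BSet_inr, Set.mem_insert_iff, Set.mem_singleton_iff,
          Set.mem_univ, ne_eq, Sum.inr.injEq, Sum.inl.injEq, reduceCtorEq, Fin.isValue,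
          Fin.ext_iff, e0, e1, Nat.even_iff]
        revert t
        decide
      · exact (BSet_diff_inr (B' := (∅ : Set (Fin 3))) (by intro s; fin_cases s <;> simp)).symm
    exact Relation.ReflTransGen.head s1 (Relation.ReflTransGen.head s2 (Relation.ReflTransGen.head s3 (Relation.ReflTransGen.head lastL Relation.ReflTransGen.refl)))


/-- Every graph in the class `C1 ∪ C2 ∪ C3` can be reduced to a single vertex by
repeatedly deleting a one-vertex extension of the current graph. -/
theorem C_classes_totally_decomposable {W : Type*} [Fintype W] (G : SimpleGraph W)
    (c : Fin 3) (n : ℕ) (hn : 2 ≤ n) (hiso : Nonempty (G ≃g CGraph c n)) :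
    ∃ x : W, Relation.ReflTransGen (OVEStep G) Set.univ {x} := by
  obtain ⟨e⟩ := hiso
  obtain ⟨x, hx⟩ := cgraph_decomp c n hn
  let f : CGraph c n ≃g G := e.symm
  refine ⟨f x, ?_⟩
  have h1 : (f '' (Set.univ : Set (Fin n ⊕ Fin 3)) : Set W) = Set.univ := by
    rw [Set.image_univ]
    exact f.toEquiv.range_eq_univ
  have h2 : (f '' ({x} : Set (Fin n ⊕ Fin 3))) = {f x} := Set.image_singleton
  have hmain := Relation.ReflTransGen.lift (fun S => f '' S)
    (fun a b hab => ovestep_map f hab) _ _ hx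
  simp only [Function.onFun] at hmain
  rw [h1, h2] at hmain
  exact hmain
end
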